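/- arXiv:1405.1738 — 4 statements merged into one kernel-verified Lean document; each statement's English description precedes it below -/
import Mathlib

section
/- If P and Q are complex polynomials with P(0) ≠ 0 or Q(0) ≠ 0 (i.e., the fraction P/Q is in lowest terms has min(p₀,q₀)=0 for multiplicities at 0), P has degree p with a root of multiplicity p₀ at 0, Q has degree q with a root of multiplicity q₀ at 0, P·Q ≠ 0, and α ∈ (0,1), then the polynomial z(P'Q - PQ') + αPQ has degree exactly p + q, and its multiplicity of zero at the origin is exactly p₀ + q₀. -/
open Polynomial

private lemma coeff_X_mul_derivative (A : Polynomial ℂ) (k : ℕ) :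
    (X * derivative A).coeff k = k * A.coeff k := by
  cases k with
  | zero => simp [mul_coeff_zero]
  | succ n => rw [coeff_X_mul, coeff_derivative]; push_cast; ring

private lemma mul_coeff_lo_zero (f g : Polynomial ℂ) (m n k : ℕ)
    (hf : ∀ i < m, f.coeff i = 0) (hg : ∀ j < n, g.coeff j = 0) (hk : k < m + n) :
    (f * g).coeff k = 0 := by
  rw [coeff_mul]
  apply Finset.sum_eq_zero
  rintro ⟨i, j⟩ hij
  rw [Finset.HasAntidiagonal.mem_antidiagonal] at hij
  by_cases hi : i < m
  · simp [hf i hi]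
  · have hj : j < n := by omega
    simp [hg j hj]

private lemma mul_coeff_lo (f g : Polynomial ℂ) (m n : ℕ)
    (hf : ∀ i < m, f.coeff i = 0) (hg : ∀ j < n, g.coeff j = 0) :
    (f * g).coeff (m + n) = f.coeff m * g.coeff n := by
  rw [coeff_mul]
  refine Finset.sum_eq_single (m, n) ?_ (by simp)
  rintro ⟨i, j⟩ hij hne
  rw [Finset.HasAntidiagonal.mem_antidiagonal] at hij
  by_cases hi : i < m
  · simp [hf i hi]
  · have hj : j < n := by
      rcases lt_or_eq_of_le (not_lt.mp hi) with h | h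
      · omega
      · exfalso; apply hne; simp [← h]; omega
    simp [hg j hj]

/-- If `P/Q` is in lowest terms at `0` (i.e. `P(0) ≠ 0` or `Q(0) ≠ 0`),
`deg P = p`, `deg Q = q`, the root multiplicities of `P, Q` at `0` are
`p₀, q₀`, and `α ∈ (0,1)`, then `z(P'Q - PQ') + αPQ` has degree exactly
`p + q` and root multiplicity exactly `p₀ + q₀` at the origin. -/
theorem critical_point_polynomial_degree (P Q : Polynomial ℂ) (α : ℝ)
    (hα : α ∈ Set.Ioo (0 : ℝ) 1)
    (hP : P ≠ 0) (hQ : Q ≠ 0) (h0 : P.eval 0 ≠ 0 ∨ Q.eval 0 ≠ 0)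
    (p q p₀ q₀ : ℕ) (hp : P.natDegree = p) (hq : Q.natDegree = q)
    (hp₀ : rootMultiplicity 0 P = p₀) (hq₀ : rootMultiplicity 0 Q = q₀) :
    (X * (derivative P * Q - P * derivative Q) + C (α : ℂ) * (P * Q)).natDegree = p + q ∧
    rootMultiplicity 0 (X * (derivative P * Q - P * derivative Q) + C (α : ℂ) * (P * Q))
      = p₀ + q₀ := by
  obtain ⟨hα0, hα1⟩ := hα
  set R : Polynomial ℂ := X * (derivative P * Q - P * derivative Q) + C (α : ℂ) * (P * Q)
    with hR
  have hRform : R = (X * derivative P) * Q - P * (X * derivative Q) + C (α : ℂ) * (P * Q) := by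
    rw [hR]; ring
  -- trailing degrees
  have htP : P.natTrailingDegree = p₀ := by
    rw [← rootMultiplicity_eq_natTrailingDegree', hp₀]
  have htQ : Q.natTrailingDegree = q₀ := by
    rw [← rootMultiplicity_eq_natTrailingDegree', hq₀]
  -- coefficient facts for P
  have hPhi : ∀ i, p < i → P.coeff i = 0 := fun i hi =>
    coeff_eq_zero_of_natDegree_lt (hp ▸ hi)
  have hQhi : ∀ i, q < i → Q.coeff i = 0 := fun i hi =>
    coeff_eq_zero_of_natDegree_lt (hq ▸ hi)
  have hPlo : ∀ i < p₀, P.coeff i = 0 := fun i hi =>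
    coeff_eq_zero_of_lt_natTrailingDegree (htP ▸ hi)
  have hQlo : ∀ i < q₀, Q.coeff i = 0 := fun i hi =>
    coeff_eq_zero_of_lt_natTrailingDegree (htQ ▸ hi)
  have hPp : P.coeff p ≠ 0 := by
    rw [← hp]; exact leadingCoeff_ne_zero.mpr hP
  have hQq : Q.coeff q ≠ 0 := by
    rw [← hq]; exact leadingCoeff_ne_zero.mpr hQ
  have hPp0 : P.coeff p₀ ≠ 0 := by
    rw [← htP]; exact trailingCoeff_nonzero_iff_nonzero.mpr hP
  have hQq0 : Q.coeff q₀ ≠ 0 := by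
    rw [← htQ]; exact trailingCoeff_nonzero_iff_nonzero.mpr hQ
  -- coefficient facts for X * P', X * Q'
  have hXPhi : ∀ i, p < i → (X * derivative P).coeff i = 0 := fun i hi => by
    rw [coeff_X_mul_derivative, hPhi i hi, mul_zero]
  have hXQhi : ∀ i, q < i → (X * derivative Q).coeff i = 0 := fun i hi => by
    rw [coeff_X_mul_derivative, hQhi i hi, mul_zero]
  have hXPlo : ∀ i < p₀, (X * derivative P).coeff i = 0 := fun i hi => by
    rw [coeff_X_mul_derivative, hPlo i hi, mul_zero]
  have hXQlo : ∀ i < q₀, (X * derivative Q).coeff i = 0 := fun i hi => by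
    rw [coeff_X_mul_derivative, hQlo i hi, mul_zero]
  have hXPd : (X * derivative P).natDegree ≤ p :=
    natDegree_le_iff_coeff_eq_zero.mpr fun N hN => hXPhi N hN
  have hXQd : (X * derivative Q).natDegree ≤ q :=
    natDegree_le_iff_coeff_eq_zero.mpr fun N hN => hXQhi N hN
  -- general coefficient formula
  have hcoeff : ∀ k, R.coeff k = ((X * derivative P) * Q).coeff k
      - (P * (X * derivative Q)).coeff k + (α : ℂ) * (P * Q).coeff k := by
    intro k
    rw [hRform, coeff_add, coeff_sub, coeff_C_mul]
  -- top coefficient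
  have htop : R.coeff (p + q) = ((p : ℂ) - q + α) * (P.coeff p * Q.coeff q) := by
    rw [hcoeff, coeff_mul_add_eq_of_natDegree_le hXPd hq.le,
      coeff_mul_add_eq_of_natDegree_le hp.le hXQd,
      coeff_mul_add_eq_of_natDegree_le hp.le hq.le,
      coeff_X_mul_derivative, coeff_X_mul_derivative]
    ring
  have htopne : ((p : ℂ) - q + α) ≠ 0 := by
    intro h
    have hre : (p : ℝ) - q + α = 0 := by
      have := congrArg Complex.re h
      simpa using this
    rcases le_or_gt (q : ℝ) (p : ℝ) with h' | h'
    · linarith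
    · have : (p : ℝ) + 1 ≤ q := by exact_mod_cast Nat.cast_lt.mp h'
      linarith
  have hRtop : R.coeff (p + q) ≠ 0 := by
    rw [htop]; exact mul_ne_zero htopne (mul_ne_zero hPp hQq)
  -- degree bound
  have hdegle : R.natDegree ≤ p + q := by
    rw [hRform]
    refine (natDegree_add_le _ _).trans (max_le ?_ ?_)
    · refine (natDegree_sub_le _ _).trans (max_le ?_ ?_)
      · exact (natDegree_mul_le).trans (add_le_add hXPd hq.le)
      · exact (natDegree_mul_le).trans (add_le_add hp.le hXQd)
    · exact (natDegree_C_mul_le _ _).trans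
        ((natDegree_mul_le).trans (add_le_add hp.le hq.le))
  have hdeg : R.natDegree = p + q := natDegree_eq_of_le_of_coeff_ne_zero hdegle hRtop
  have hRne : R ≠ 0 := fun h => hRtop (by rw [h, coeff_zero])
  -- low coefficients vanish
  have hlo : ∀ k < p₀ + q₀, R.coeff k = 0 := by
    intro k hk
    rw [hcoeff, mul_coeff_lo_zero _ _ p₀ q₀ k hXPlo hQlo hk,
      mul_coeff_lo_zero _ _ p₀ q₀ k hPlo hXQlo hk,
      mul_coeff_lo_zero _ _ p₀ q₀ k hPlo hQlo hk]
    ring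
  -- trailing coefficient
  have hbot : R.coeff (p₀ + q₀) = ((p₀ : ℂ) - q₀ + α) * (P.coeff p₀ * Q.coeff q₀) := by
    rw [hcoeff, mul_coeff_lo _ _ p₀ q₀ hXPlo hQlo,
      mul_coeff_lo _ _ p₀ q₀ hPlo hXQlo,
      mul_coeff_lo _ _ p₀ q₀ hPlo hQlo,
      coeff_X_mul_derivative, coeff_X_mul_derivative]
    ring
  -- one of p₀, q₀ is zero
  have hmin : p₀ = 0 ∨ q₀ = 0 := by
    rcases h0 with h | h
    · left
      rw [← htP]
      have : P.coeff 0 ≠ 0 := by rwa [← coeff_zero_eq_eval_zero] at h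
      exact Nat.le_zero.mp (natTrailingDegree_le_of_ne_zero this)
    · right
      rw [← htQ]
      have : Q.coeff 0 ≠ 0 := by rwa [← coeff_zero_eq_eval_zero] at h
      exact Nat.le_zero.mp (natTrailingDegree_le_of_ne_zero this)
  have hbotne : ((p₀ : ℂ) - q₀ + α) ≠ 0 := by
    intro h
    have hre : (p₀ : ℝ) - q₀ + α = 0 := by
      have := congrArg Complex.re h
      simpa using this
    rcases hmin with h' | h'
    · rcases Nat.eq_zero_or_pos q₀ with h'' | h''
      · rw [h', h''] at hre; simp at hre; linarith
      · have : (1 : ℝ) ≤ q₀ := by exact_mod_cast h''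
        rw [h'] at hre; simp at hre; linarith
    · rw [h'] at hre; simp at hre
      have : (0 : ℝ) ≤ p₀ := Nat.cast_nonneg _
      linarith
  have hRbot : R.coeff (p₀ + q₀) ≠ 0 := by
    rw [hbot]; exact mul_ne_zero hbotne (mul_ne_zero hPp0 hQq0)
  have htd : R.natTrailingDegree = p₀ + q₀ :=
    le_antisymm (natTrailingDegree_le_of_ne_zero hRbot) (le_natTrailingDegree hRne hlo)
  exact ⟨hdeg, by rw [rootMultiplicity_eq_natTrailingDegree', htd]⟩
end

section
/- For α ∈ (0,1) and any nonzero polynomial R of degree at most p + q, there exist nonzero polynomials P of degree at most p and Q of degree at most q, not both zero, such that z(P'Q - PQ') + αPQ = c·R for some nonzero constant c. -/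
set_option linter.unusedSectionVars false
set_option maxHeartbeats 1000000

namespace WAlpha

section PolyPart
open Polynomial



lemma coeff_W (a : ℂ) (P Q : Polynomial ℂ) (k : ℕ) :
    (X * (derivative P * Q - P * derivative Q) + C a * (P * Q)).coeff k
      = ∑ ij ∈ Finset.HasAntidiagonal.antidiagonal k,
          ((ij.1 : ℂ) - (ij.2 : ℂ) + a) * (P.coeff ij.1 * Q.coeff ij.2) := by
  have hsplit : ∑ ij ∈ Finset.HasAntidiagonal.antidiagonal k,
      ((ij.1 : ℂ) - (ij.2 : ℂ) + a) * (P.coeff ij.1 * Q.coeff ij.2)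
      = ((∑ ij ∈ Finset.HasAntidiagonal.antidiagonal k, ((ij.1 : ℂ)) * (P.coeff ij.1 * Q.coeff ij.2))
        - ∑ ij ∈ Finset.HasAntidiagonal.antidiagonal k, ((ij.2 : ℂ)) * (P.coeff ij.1 * Q.coeff ij.2))
        + a * ∑ ij ∈ Finset.HasAntidiagonal.antidiagonal k, P.coeff ij.1 * Q.coeff ij.2 := by
    rw [Finset.mul_sum, ← Finset.sum_sub_distrib, ← Finset.sum_add_distrib]
    exact Finset.sum_congr rfl (fun ij _ => by ring)
  rw [hsplit, coeff_add, coeff_C_mul, ← coeff_mul]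
  congr 1
  cases k with
  | zero =>
      rw [mul_coeff_zero, coeff_X_zero, zero_mul]
      simp
  | succ n =>
      rw [coeff_X_mul, coeff_sub, coeff_mul, coeff_mul]
      have h1 : ∑ ij ∈ Finset.HasAntidiagonal.antidiagonal (n+1), ((ij.1 : ℂ)) * (P.coeff ij.1 * Q.coeff ij.2)
          = ∑ ij ∈ Finset.HasAntidiagonal.antidiagonal n, (derivative P).coeff ij.1 * Q.coeff ij.2 := by
        rw [Finset.Nat.antidiagonal_succ, Finset.sum_cons, Finset.sum_map]
        simp only [Nat.cast_zero, zero_mul, zero_add]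
        apply Finset.sum_congr rfl
        intro ij _
        simp only [Function.Embedding.coe_prodMap, Function.Embedding.coeFn_mk,
          Function.Embedding.refl_apply, Prod.map_fst, Prod.map_snd, coeff_derivative]
        push_cast
        ring
      have h2 : ∑ ij ∈ Finset.HasAntidiagonal.antidiagonal (n+1), ((ij.2 : ℂ)) * (P.coeff ij.1 * Q.coeff ij.2)
          = ∑ ij ∈ Finset.HasAntidiagonal.antidiagonal n, P.coeff ij.1 * (derivative Q).coeff ij.2 := by
        rw [Finset.Nat.antidiagonal_succ', Finset.sum_cons, Finset.sum_map]
        simp only [Nat.cast_zero, zero_mul, zero_add]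
        apply Finset.sum_congr rfl
        intro ij _
        simp only [Function.Embedding.coe_prodMap, Function.Embedding.coeFn_mk,
          Function.Embedding.refl_apply, Prod.map_fst, Prod.map_snd, coeff_derivative]
        push_cast
        ring
      rw [h1, h2]

/-- the zero lemma : for `0 < α < 1` the bilinear map has no nontrivial zeros. -/
lemma W_ne_zero {α : ℝ} (hα0 : 0 < α) (hα1 : α < 1) {P Q : Polynomial ℂ}
    (hP : P ≠ 0) (hQ : Q ≠ 0) :
    X * (derivative P * Q - P * derivative Q) + C (α : ℂ) * (P * Q) ≠ 0 := by
  intro h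
  have hc := coeff_W (α : ℂ) P Q (P.natDegree + Q.natDegree)
  rw [h, coeff_zero] at hc
  have hsingle : ∑ ij ∈ Finset.HasAntidiagonal.antidiagonal (P.natDegree + Q.natDegree),
      ((ij.1 : ℂ) - (ij.2 : ℂ) + (α : ℂ)) * (P.coeff ij.1 * Q.coeff ij.2)
      = ((P.natDegree : ℂ) - (Q.natDegree : ℂ) + (α : ℂ)) * (P.leadingCoeff * Q.leadingCoeff) := by
    apply Finset.sum_eq_single_of_mem (P.natDegree, Q.natDegree)
    · simp [Finset.HasAntidiagonal.mem_antidiagonal]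
    · intro ij hmem hne
      rw [Finset.HasAntidiagonal.mem_antidiagonal] at hmem
      rcases lt_or_ge P.natDegree ij.1 with hgt | hle
      · rw [Polynomial.coeff_eq_zero_of_natDegree_lt hgt]; ring
      · have : Q.natDegree < ij.2 := by
          rcases lt_or_eq_of_le hle with h' | h'
          · omega
          · exfalso; apply hne; rw [Prod.ext_iff]; constructor <;> omega
        rw [Polynomial.coeff_eq_zero_of_natDegree_lt this]; ring
  rw [hsingle] at hc
  have hlP : P.leadingCoeff ≠ 0 := leadingCoeff_ne_zero.mpr hP
  have hlQ : Q.leadingCoeff ≠ 0 := leadingCoeff_ne_zero.mpr hQ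
  have hfac : ((P.natDegree : ℂ) - (Q.natDegree : ℂ) + (α : ℂ)) ≠ 0 := by
    intro h0
    have : (((P.natDegree : ℝ) - (Q.natDegree : ℝ) + α : ℝ) : ℂ) = 0 := by
      push_cast
      convert h0 using 2
    rw [Complex.ofReal_eq_zero] at this
    rcases le_or_gt (Q.natDegree : ℝ) (P.natDegree : ℝ) with hle | hlt
    · nlinarith
    · have : (P.natDegree : ℝ) - (Q.natDegree : ℝ) ≤ -1 := by
        have : (P.natDegree : ℝ) + 1 ≤ (Q.natDegree : ℝ) := by exact_mod_cast Nat.add_one_le_iff.mpr (by exact_mod_cast hlt)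
        linarith
      linarith
  exact hfac (by
    have := mul_ne_zero hlP hlQ
    field_simp at hc
    rcases mul_eq_zero.mp hc.symm with h' | h'
    · rcases mul_eq_zero.mp h' with h'' | h''
      · exact h''
      · exact absurd h'' hlP
    · exact absurd h' hlQ)


end PolyPart

section MvPart
open MvPolynomial



section Graded

variable {σ : Type*} [Fintype σ] [DecidableEq σ]

/-- product rule for weighted homogeneous components, when the second factor is
weighted homogeneous. -/
lemma weightedHomogeneousComponent_mul_right {w : σ → ℤ × ℤ} {ψ : MvPolynomial σ ℂ}
    {n : ℤ × ℤ} (hψ : IsWeightedHomogeneous w ψ n) (φ : MvPolynomial σ ℂ) (m : ℤ × ℤ) :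
    weightedHomogeneousComponent w (m + n) (φ * ψ)
      = weightedHomogeneousComponent w m φ * ψ := by
  ext μ
  rw [coeff_weightedHomogeneousComponent, MvPolynomial.coeff_mul, MvPolynomial.coeff_mul]
  by_cases hμ : Finsupp.weight w μ = m + n
  · rw [if_pos hμ]
    apply Finset.sum_congr rfl
    intro uv huv
    rw [Finset.HasAntidiagonal.mem_antidiagonal] at huv
    rw [coeff_weightedHomogeneousComponent]
    by_cases hv : MvPolynomial.coeff uv.2 ψ = 0
    · rw [hv, mul_zero, mul_zero]
    · have hwv : Finsupp.weight w uv.2 = n := hψ hv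
      have hwu : Finsupp.weight w uv.1 = m := by
        have h2 : Finsupp.weight w μ = Finsupp.weight w uv.1 + n := by
          rw [← hwv, ← map_add, huv]
        rw [hμ] at h2
        exact (add_right_cancel h2.symm)
      rw [if_pos hwu]
  · rw [if_neg hμ]
    symm
    apply Finset.sum_eq_zero
    intro uv huv
    rw [Finset.HasAntidiagonal.mem_antidiagonal] at huv
    rw [coeff_weightedHomogeneousComponent]
    by_cases hv : MvPolynomial.coeff uv.2 ψ = 0
    · rw [hv, mul_zero]
    · have hwv : Finsupp.weight w uv.2 = n := hψ hv
      by_cases hwu : Finsupp.weight w uv.1 = m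
      · exfalso
        apply hμ
        have h2 := map_add (Finsupp.weight w) uv.1 uv.2
        rw [huv, hwu, hwv] at h2
        exact h2
      · rw [if_neg hwu, zero_mul]

/-- a polynomial lies in the span of the monomials (with coefficient 1) whose
exponents satisfy any predicate that holds on its support. -/
lemma mem_span_monomials {P : (σ →₀ ℕ) → Prop} {φ : MvPolynomial σ ℂ}
    (h : ∀ μ ∈ φ.support, P μ) :
    φ ∈ Submodule.span ℂ {s : MvPolynomial σ ℂ | ∃ μ, P μ ∧ s = monomial μ 1} := by
  rw [φ.as_sum]
  apply Submodule.sum_mem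
  intro μ hμ
  have : monomial μ (MvPolynomial.coeff μ φ) = (MvPolynomial.coeff μ φ) • monomial μ (1:ℂ) := by
    rw [MvPolynomial.smul_monomial, smul_eq_mul, mul_one]
  rw [this]
  exact Submodule.smul_mem _ _ (Submodule.subset_span ⟨μ, h μ hμ, rfl⟩)

/-- an `IsWeightedHomogeneous` polynomial is in the span of the corresponding
monomials. -/
lemma homogeneous_mem_span {w : σ → ℤ × ℤ} {φ : MvPolynomial σ ℂ} {n : ℤ × ℤ}
    (hφ : IsWeightedHomogeneous w φ n) :
    φ ∈ Submodule.span ℂ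
      {s : MvPolynomial σ ℂ | ∃ μ, Finsupp.weight w μ = n ∧ s = monomial μ 1} := by
  apply mem_span_monomials
  intro μ hμ
  exact hφ (mem_support_iff.mp hμ)

end Graded






section Segre

variable {p q : ℕ}

/-- weights for the `ℤ × ℤ` (weight, degree) bigrading -/
def wt (p q : ℕ) : (Fin (p+1) ⊕ Fin (q+1)) → ℤ × ℤ :=
  Sum.elim (fun _ => ((1:ℤ), (1:ℤ))) (fun _ => ((-1:ℤ), (1:ℤ)))

/-- `a`-degree of an exponent vector -/
def dA (μ : (Fin (p+1) ⊕ Fin (q+1)) →₀ ℕ) : ℕ := ∑ i, μ (Sum.inl i)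

/-- `b`-degree of an exponent vector -/
def dB (μ : (Fin (p+1) ⊕ Fin (q+1)) →₀ ℕ) : ℕ := ∑ j, μ (Sum.inr j)

lemma weight_eq (μ : (Fin (p+1) ⊕ Fin (q+1)) →₀ ℕ) :
    Finsupp.weight (wt p q) μ = ((dA μ : ℤ) - (dB μ : ℤ), (dA μ : ℤ) + (dB μ : ℤ)) := by
  have h : Finsupp.weight (wt p q) μ = ∑ v : Fin (p+1) ⊕ Fin (q+1), μ v • (wt p q v) := by
    rw [Finsupp.weight_apply]
    apply Finsupp.sum_fintype
    intro v; simp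
  rw [h, Fintype.sum_sum_type]
  have hA : ∀ i : Fin (p+1), μ (Sum.inl i) • (wt p q (Sum.inl i))
      = ((μ (Sum.inl i) : ℤ), (μ (Sum.inl i) : ℤ)) := by
    intro i; simp [wt, Prod.smul_def]
  have hB : ∀ j : Fin (q+1), μ (Sum.inr j) • (wt p q (Sum.inr j))
      = (-(μ (Sum.inr j) : ℤ), (μ (Sum.inr j) : ℤ)) := by
    intro j; simp [wt, Prod.smul_def]
  simp only [hA, hB]
  apply Prod.ext
  · simp only [Prod.fst_add, Prod.fst_sum]
    rw [dA, dB]; push_cast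
    rw [Finset.sum_neg_distrib]; ring
  · simp only [Prod.snd_add, Prod.snd_sum]
    rw [dA, dB]; push_cast; ring

lemma balanced_of_weight {μ : (Fin (p+1) ⊕ Fin (q+1)) →₀ ℕ} {r : ℕ}
    (h : Finsupp.weight (wt p q) μ = ((0:ℤ), (2*r : ℤ))) : dA μ = r ∧ dB μ = r := by
  rw [weight_eq, Prod.mk.injEq] at h
  omega

lemma weight_of_balanced {μ : (Fin (p+1) ⊕ Fin (q+1)) →₀ ℕ} {r : ℕ}
    (h1 : dA μ = r) (h2 : dB μ = r) :
    Finsupp.weight (wt p q) μ = ((0:ℤ), (2*r : ℤ)) := by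
  rw [weight_eq, h1, h2, Prod.mk.injEq]
  omega

lemma pair_eq_monomial (i : Fin (p+1)) (j : Fin (q+1)) :
    (X (Sum.inl i) * X (Sum.inr j) : MvPolynomial (Fin (p+1) ⊕ Fin (q+1)) ℂ)
      = monomial (Finsupp.single (Sum.inl i) 1 + Finsupp.single (Sum.inr j) 1) 1 := by
  rw [← pow_one (X (Sum.inl i)), X_pow_eq_monomial, ← pow_one (X (Sum.inr j)),
    X_pow_eq_monomial, monomial_mul, one_mul]

lemma dA_single_pair (i : Fin (p+1)) (j : Fin (q+1)) :
    dA (Finsupp.single (Sum.inl i) 1 + Finsupp.single (Sum.inr j) (1:ℕ)) = 1 := by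
  simp [dA, Finsupp.add_apply, Finsupp.single_apply, Finset.sum_add_distrib]

lemma dB_single_pair (i : Fin (p+1)) (j : Fin (q+1)) :
    dB (Finsupp.single (Sum.inl i) 1 + Finsupp.single (Sum.inr j) (1:ℕ)) = 1 := by
  simp [dB, Finsupp.add_apply, Finsupp.single_apply, Finset.sum_add_distrib]

lemma dA_add (μ ν : (Fin (p+1) ⊕ Fin (q+1)) →₀ ℕ) : dA (μ + ν) = dA μ + dA ν := by
  rw [dA, dA, dA, ← Finset.sum_add_distrib]
  exact Finset.sum_congr rfl (fun i _ => Finsupp.add_apply _ _ _)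

lemma dB_add (μ ν : (Fin (p+1) ⊕ Fin (q+1)) →₀ ℕ) : dB (μ + ν) = dB μ + dB ν := by
  rw [dB, dB, dB, ← Finset.sum_add_distrib]
  exact Finset.sum_congr rfl (fun i _ => Finsupp.add_apply _ _ _)

lemma homog_pow {σ : Type*} {w : σ → ℤ × ℤ} {φ : MvPolynomial σ ℂ} {n : ℤ × ℤ}
    (h : IsWeightedHomogeneous w φ n) (m : ℕ) :
    IsWeightedHomogeneous w (φ ^ m) (m • n) := by
  induction m with
  | zero => simpa using isWeightedHomogeneous_one ℂ w
  | succ k ih =>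
      rw [pow_succ, succ_nsmul]
      exact ih.mul h

end Segre


section SegreCore

variable {p q : ℕ} {ι : Type} [Fintype ι] [DecidableEq ι]

lemma dA_single_inl (i : Fin (p+1)) (m : ℕ) :
    dA (Finsupp.single (Sum.inl i : Fin (p+1) ⊕ Fin (q+1)) m) = m := by
  simp [dA, Finsupp.single_apply]

lemma dA_single_inr (j : Fin (q+1)) (m : ℕ) :
    dA (Finsupp.single (Sum.inr j : Fin (p+1) ⊕ Fin (q+1)) m) = 0 := by
  simp [dA, Finsupp.single_apply]

lemma dB_single_inl (i : Fin (p+1)) (m : ℕ) :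
    dB (Finsupp.single (Sum.inl i : Fin (p+1) ⊕ Fin (q+1)) m) = 0 := by
  simp [dB, Finsupp.single_apply]

lemma dB_single_inr (j : Fin (q+1)) (m : ℕ) :
    dB (Finsupp.single (Sum.inr j : Fin (p+1) ⊕ Fin (q+1)) m) = m := by
  simp [dB, Finsupp.single_apply]

theorem segre_core (hcard : Fintype.card ι ≤ p + q)
    (g : ι → MvPolynomial (Fin (p+1) ⊕ Fin (q+1)) ℂ)
    (hg : ∀ k, g k ∈ Submodule.span ℂ
      {s : MvPolynomial (Fin (p+1) ⊕ Fin (q+1)) ℂ | ∃ i j, s = X (Sum.inl i) * X (Sum.inr j)})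
    (hno : ∀ x : (Fin (p+1) ⊕ Fin (q+1)) → ℂ, (∀ k, eval x (g k) = 0) →
      (∀ i, x (Sum.inl i) = 0) ∨ (∀ j, x (Sum.inr j) = 0)) : False := by
  classical
  -- each `g k` is weighted homogeneous of weight (0,2)
  have hgh : ∀ k, IsWeightedHomogeneous (wt p q) (g k) ((0:ℤ), (2:ℤ)) := by
    intro k
    have hle : Submodule.span ℂ
        {s : MvPolynomial (Fin (p+1) ⊕ Fin (q+1)) ℂ | ∃ i j, s = X (Sum.inl i) * X (Sum.inr j)}
        ≤ weightedHomogeneousSubmodule ℂ (wt p q) ((0:ℤ), (2:ℤ)) := by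
      apply Submodule.span_le.mpr
      rintro s ⟨i, j, rfl⟩
      rw [SetLike.mem_coe, mem_weightedHomogeneousSubmodule, pair_eq_monomial]
      apply isWeightedHomogeneous_monomial
      have := weight_of_balanced (dA_single_pair i j) (dB_single_pair i j)
      rw [this]; norm_num
    exact hle (hg k)
  -- pair homogeneity
  have hpairh : ∀ (i : Fin (p+1)) (j : Fin (q+1)),
      IsWeightedHomogeneous (wt p q)
        ((X (Sum.inl i) * X (Sum.inr j) : MvPolynomial (Fin (p+1) ⊕ Fin (q+1)) ℂ))
        ((0:ℤ), (2:ℤ)) := by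
    intro i j
    rw [pair_eq_monomial]
    apply isWeightedHomogeneous_monomial
    rw [weight_of_balanced (dA_single_pair i j) (dB_single_pair i j)]; norm_num
  -- Nullstellensatz : some power of each pair lies in the ideal
  have hrad : ∀ (i : Fin (p+1)) (j : Fin (q+1)), ∃ n : ℕ,
      ((X (Sum.inl i) * X (Sum.inr j) : MvPolynomial (Fin (p+1) ⊕ Fin (q+1)) ℂ)) ^ n
        ∈ Ideal.span (Set.range g) := by
    intro i j
    rw [← Ideal.mem_radical_iff, ← MvPolynomial.vanishingIdeal_zeroLocus_eq_radical (K := ℂ),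
      MvPolynomial.mem_vanishingIdeal_iff]
    intro x hx
    have hk : ∀ k, eval x (g k) = 0 := fun k =>
      (MvPolynomial.mem_zeroLocus_iff.mp hx) _ (Ideal.subset_span ⟨k, rfl⟩)
    rcases hno x hk with h | h
    · simp [h]
    · simp [h]
  choose MM hMM using hrad
  set M : ℕ := (Finset.univ.sup (fun ij : Fin (p+1) × Fin (q+1) => MM ij.1 ij.2)) + 1 with hMdef
  have hM1 : 1 ≤ M := Nat.le_add_left 1 _
  have hpow : ∀ (i : Fin (p+1)) (j : Fin (q+1)),
      ((X (Sum.inl i) * X (Sum.inr j) : MvPolynomial (Fin (p+1) ⊕ Fin (q+1)) ℂ)) ^ M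
        ∈ Ideal.span (Set.range g) := by
    intro i j
    have hle : MM i j ≤ M := le_trans
      (Finset.le_sup (f := fun ij : Fin (p+1) × Fin (q+1) => MM ij.1 ij.2)
        (Finset.mem_univ (i, j))) (Nat.le_succ _)
    have : ((X (Sum.inl i) * X (Sum.inr j) : MvPolynomial (Fin (p+1) ⊕ Fin (q+1)) ℂ)) ^ M
        = ((X (Sum.inl i) * X (Sum.inr j)) ^ (M - MM i j)) * ((X (Sum.inl i) * X (Sum.inr j)) ^ (MM i j)) := by
      rw [← pow_add, Nat.sub_add_cancel hle]
    rw [this]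
    exact Ideal.mul_mem_left _ _ (hMM i j)
  -- extraction : homogeneous representation of the pair powers
  have hrep : ∀ (i : Fin (p+1)) (j : Fin (q+1)), ∃ h' : ι → MvPolynomial (Fin (p+1) ⊕ Fin (q+1)) ℂ,
      (((X (Sum.inl i) * X (Sum.inr j) : MvPolynomial (Fin (p+1) ⊕ Fin (q+1)) ℂ)) ^ M
        = ∑ k, h' k * g k)
      ∧ ∀ k, IsWeightedHomogeneous (wt p q) (h' k) ((0:ℤ), 2*(M:ℤ) - 2) := by
    intro i j
    obtain ⟨c0, hc0⟩ := (Submodule.mem_span_range_iff_exists_fun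
      (MvPolynomial (Fin (p+1) ⊕ Fin (q+1)) ℂ)).mp (hpow i j)
    refine ⟨fun k => weightedHomogeneousComponent (wt p q) ((0:ℤ), 2*(M:ℤ)-2) (c0 k), ?_,
      fun k => weightedHomogeneousComponent_isWeightedHomogeneous _ _⟩
    have hXh : IsWeightedHomogeneous (wt p q)
        (((X (Sum.inl i) * X (Sum.inr j) : MvPolynomial (Fin (p+1) ⊕ Fin (q+1)) ℂ)) ^ M)
        ((0:ℤ), 2*(M:ℤ)) := by
      have := homog_pow (hpairh i j) M
      convert this using 1
      rw [Prod.smul_def]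
      simp [mul_comm]
    conv_lhs => rw [← hXh.weightedHomogeneousComponent_same, ← hc0]
    rw [map_sum]
    apply Finset.sum_congr rfl
    intro k _
    have heq : ((0:ℤ), 2*(M:ℤ)) = ((0:ℤ), 2*(M:ℤ)-2) + ((0:ℤ), (2:ℤ)) := by
      rw [Prod.mk_add_mk]; norm_num
    rw [smul_eq_mul, heq, weightedHomogeneousComponent_mul_right (hgh k)]
  choose hcoef hrep1 hrep2 using hrep
  -- the finite generating system
  set D : ℕ := (p+q+2) * M with hDdef
  have hMD : M ≤ D := by
    rw [hDdef]
    exact Nat.le_mul_of_pos_left M (by omega)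
  set Gen : ℕ → Set (MvPolynomial (Fin (p+1) ⊕ Fin (q+1)) ℂ) := fun d =>
    {s | ∃ c : ι → ℕ, (∀ k, c k ≤ d) ∧ ∃ μ : (Fin (p+1) ⊕ Fin (q+1)) →₀ ℕ,
      (∀ v, μ v ≤ 2*D) ∧ s = (∏ k, g k ^ c k) * monomial μ 1} with hGendef
  set Sp : ℕ → Submodule ℂ (MvPolynomial (Fin (p+1) ⊕ Fin (q+1)) ℂ) := fun d =>
    Submodule.span ℂ (Gen d) with hSpdef
  have hSpMono : ∀ {d d' : ℕ}, d ≤ d' → Sp d ≤ Sp d' := by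
    intro d d' hdd
    apply Submodule.span_mono
    rintro s ⟨c, hc, μ0, hμ0, rfl⟩
    exact ⟨c, fun k => le_trans (hc k) hdd, μ0, hμ0, rfl⟩
  -- Lemma A : every balanced monomial of bidegree (d,d) lies in Sp d
  have lemA : ∀ d (μ : (Fin (p+1) ⊕ Fin (q+1)) →₀ ℕ),
      dA μ = d → dB μ = d → monomial μ (1:ℂ) ∈ Sp d := by
    intro d
    induction d using Nat.strong_induction_on with
    | _ d IH =>
    intro μ hA hB
    by_cases hd : d ≤ D
    · apply Submodule.subset_span
      refine ⟨fun _ => 0, fun k => Nat.zero_le _, μ, ?_, by simp⟩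
      intro v
      rcases v with i | j
      · have : μ (Sum.inl i) ≤ dA μ :=
          Finset.single_le_sum (f := fun i' => μ (Sum.inl i')) (fun _ _ => Nat.zero_le _)
            (Finset.mem_univ i)
        omega
      · have : μ (Sum.inr j) ≤ dB μ :=
          Finset.single_le_sum (f := fun j' => μ (Sum.inr j')) (fun _ _ => Nat.zero_le _)
            (Finset.mem_univ j)
        omega
    · push_neg at hd
      have hMd : M ≤ d := le_trans hMD (le_of_lt hd)
      -- pigeonhole : some inl - and some inr - variable has exponent ≥ M
      have hi : ∃ i, M ≤ μ (Sum.inl i) := by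
        by_contra hcon
        push_neg at hcon
        have hb : dA μ ≤ (p+1) * (M-1) := by
          calc dA μ = ∑ i, μ (Sum.inl i) := rfl
          _ ≤ ∑ _i : Fin (p+1), (M-1) :=
              Finset.sum_le_sum (fun i _ => by have := hcon i; omega)
          _ = (p+1) * (M-1) := by
              rw [Finset.sum_const, Finset.card_univ, Fintype.card_fin, smul_eq_mul]
        have hb2 : (p+1) * (M-1) ≤ (p+q+2) * M := Nat.mul_le_mul (by omega) (by omega)
        have : d ≤ D := by rw [hDdef]; omega
        omega
      have hj : ∃ j, M ≤ μ (Sum.inr j) := by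
        by_contra hcon
        push_neg at hcon
        have hb : dB μ ≤ (q+1) * (M-1) := by
          calc dB μ = ∑ j, μ (Sum.inr j) := rfl
          _ ≤ ∑ _j : Fin (q+1), (M-1) :=
              Finset.sum_le_sum (fun j _ => by have := hcon j; omega)
          _ = (q+1) * (M-1) := by
              rw [Finset.sum_const, Finset.card_univ, Fintype.card_fin, smul_eq_mul]
        have hb2 : (q+1) * (M-1) ≤ (p+q+2) * M := Nat.mul_le_mul (by omega) (by omega)
        have : d ≤ D := by rw [hDdef]; omega
        omega
      obtain ⟨i, hi⟩ := hi
      obtain ⟨j, hj⟩ := hj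
      set π : (Fin (p+1) ⊕ Fin (q+1)) →₀ ℕ :=
        Finsupp.single (Sum.inl i) M + Finsupp.single (Sum.inr j) M with hπdef
      have hπle : π ≤ μ := by
        rw [Finsupp.le_def]
        intro v
        have hπv : π v = (if (Sum.inl i : Fin (p+1) ⊕ Fin (q+1)) = v then M else 0)
            + (if (Sum.inr j : Fin (p+1) ⊕ Fin (q+1)) = v then M else 0) := by
          rw [hπdef, Finsupp.add_apply, Finsupp.single_apply, Finsupp.single_apply]
        rw [hπv]
        rcases v with i' | j'
        · by_cases h : i = i'
          · subst h; simpa using hi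
          · simp [h]
        · by_cases h : j = j'
          · subst h; simpa using hj
          · simp [h]
      set μ' := μ - π with hμ'def
      have hsum : π + μ' = μ := add_tsub_cancel_of_le hπle
      have hdAπ : dA π = M := by
        rw [hπdef, dA_add, dA_single_inl, dA_single_inr]
      have hdBπ : dB π = M := by
        rw [hπdef, dB_add, dB_single_inl, dB_single_inr]; omega
      have hdAμ' : dA μ' = d - M := by
        have := dA_add π μ'
        rw [hsum] at this
        omega
      have hdBμ' : dB μ' = d - M := by
        have := dB_add π μ'
        rw [hsum] at this
        omega
      have hpairpow : ((X (Sum.inl i) * X (Sum.inr j) : MvPolynomial (Fin (p+1) ⊕ Fin (q+1)) ℂ)) ^ M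
          = monomial π 1 := by
        rw [pair_eq_monomial, monomial_pow, one_pow]
        congr 1
        rw [smul_add, Finsupp.smul_single, Finsupp.smul_single, hπdef]
        simp
      have hkey : monomial μ (1:ℂ)
          = ((X (Sum.inl i) * X (Sum.inr j) : MvPolynomial (Fin (p+1) ⊕ Fin (q+1)) ℂ)) ^ M
            * monomial μ' 1 := by
        rw [hpairpow, monomial_mul, one_mul, hsum]
      rw [hkey, hrep1 i j, Finset.sum_mul]
      apply Submodule.sum_mem
      intro k _
      -- the multiplication-by-(g k) helper
      have hmulg : ∀ {y : MvPolynomial (Fin (p+1) ⊕ Fin (q+1)) ℂ}, y ∈ Sp (d-1) → g k * y ∈ Sp d := by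
        intro y hy
        induction hy using Submodule.span_induction with
        | mem s hs =>
            obtain ⟨c, hc, μ0, hμ0, rfl⟩ := hs
            apply Submodule.subset_span
            refine ⟨Function.update c k (c k + 1), ?_, μ0, hμ0, ?_⟩
            · intro k'
              by_cases h : k' = k
              · subst h; rw [Function.update_self]; have := hc k'; omega
              · rw [Function.update_of_ne h]; have := hc k'; omega
            · have hprod : (∏ k', g k' ^ (Function.update c k (c k + 1)) k')
                  = g k * ∏ k', g k' ^ c k' := by
                rw [← Finset.mul_prod_erase Finset.univ
                    (fun k' => g k' ^ (Function.update c k (c k + 1)) k') (Finset.mem_univ k),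
                  ← Finset.mul_prod_erase Finset.univ (fun k' => g k' ^ c k') (Finset.mem_univ k),
                  Function.update_self, pow_succ]
                rw [Finset.prod_congr rfl (fun k' hk' => by
                  rw [Function.update_of_ne (Finset.ne_of_mem_erase hk')])]
                ring
              rw [hprod]; ring
        | zero => simp
        | add x y _ _ hx hy => rw [mul_add]; exact Submodule.add_mem _ hx hy
        | smul a x _ hx => rw [mul_smul_comm]; exact Submodule.smul_mem _ _ hx
      -- homogeneity of the cofactor
      have hyh : IsWeightedHomogeneous (wt p q) (hcoef i j k * monomial μ' (1:ℂ))
          ((0:ℤ), 2*(d:ℤ) - 2) := by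
        have h1 := hrep2 i j k
        have h2 : IsWeightedHomogeneous (wt p q) (monomial μ' (1:ℂ))
            ((0:ℤ), 2*((d - M : ℕ):ℤ)) :=
          isWeightedHomogeneous_monomial _ _ _ (weight_of_balanced hdAμ' hdBμ')
        have := h1.mul h2
        convert this using 1
        rw [Prod.mk_add_mk]
        have : ((d - M : ℕ) : ℤ) = (d:ℤ) - (M:ℤ) := by
          rw [Nat.cast_sub hMd]
        rw [this]
        norm_num
        ring
      have hrearr : hcoef i j k * g k * monomial μ' 1
          = g k * (hcoef i j k * monomial μ' 1) := by ring
      rw [hrearr]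
      have hspan := homogeneous_mem_span hyh
      refine Submodule.span_induction (p := fun y _ => g k * y ∈ Sp d) ?_ ?_ ?_ ?_ hspan
      · rintro s ⟨ν, hν, rfl⟩
        have hb : dA ν = d - 1 ∧ dB ν = d - 1 := by
          apply balanced_of_weight (r := d - 1)
          rw [hν]
          congr 1
          have hcast : ((d - 1 : ℕ) : ℤ) = (d:ℤ) - 1 := by
            rw [Nat.cast_sub (by omega)]; norm_num
          rw [hcast]; ring
        exact hmulg (IH (d-1) (by omega) ν hb.1 hb.2)
      · simp
      · intro x y hx' hy' hx hy; rw [mul_add]; exact Submodule.add_mem _ hx hy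
      · intro a x hx' hx; rw [mul_smul_comm]; exact Submodule.smul_mem _ _ hx
  -- ===== Counting contradiction =====
  set B : ℕ := (2*D+1) ^ (p+q+2) with hBdef
  set K : ℕ := (p+q+2) ^ (p+q) * B + 1 with hKdef
  set dK : ℕ := (p+q+1) * K with hdKdef
  have hK1 : 1 ≤ K := by rw [hKdef]; omega
  -- the T-generators
  set Tμ : (Fin (p+1) ⊕ Fin q) → ((Fin (p+1) ⊕ Fin (q+1)) →₀ ℕ) :=
    Sum.elim (fun i => Finsupp.single (Sum.inl i) 1 + Finsupp.single (Sum.inr (0 : Fin (q+1))) 1)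
             (fun j => Finsupp.single (Sum.inl (0 : Fin (p+1))) 1 + Finsupp.single (Sum.inr j.succ) 1)
    with hTμdef
  set Mμ : ((Fin (p+1) ⊕ Fin q) → ℕ) → ((Fin (p+1) ⊕ Fin (q+1)) →₀ ℕ) :=
    fun e => ∑ l, (e l) • Tμ l with hMμdef
  have hMμapp : ∀ e v, Mμ e v = ∑ l, e l * (Tμ l v) := by
    intro e v
    rw [hMμdef]
    rw [Finsupp.finset_sum_apply]
    exact Finset.sum_congr rfl (fun l _ => by rw [Finsupp.smul_apply, smul_eq_mul])
  have hMA : ∀ e (i' : Fin (p+1)), i' ≠ 0 → Mμ e (Sum.inl i') = e (Sum.inl i') := by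
    intro e i' hi'
    have h0 : ¬((0 : Fin (p+1)) = i') := fun h => hi' h.symm
    rw [hMμapp, Fintype.sum_sum_type]
    simp [hTμdef, Finsupp.add_apply, Finsupp.single_apply, h0]
  have hMBs : ∀ e (j0 : Fin q), Mμ e (Sum.inr j0.succ) = e (Sum.inr j0) := by
    intro e j0
    have h0 : ¬((0 : Fin (q+1)) = j0.succ) := fun h => (Fin.succ_ne_zero j0) h.symm
    rw [hMμapp, Fintype.sum_sum_type]
    simp [hTμdef, Finsupp.add_apply, Finsupp.single_apply, h0, Fin.succ_inj]
  have hMB0 : ∀ e, Mμ e (Sum.inr (0 : Fin (q+1))) = ∑ i, e (Sum.inl i) := by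
    intro e
    rw [hMμapp, Fintype.sum_sum_type]
    simp [hTμdef, Finsupp.add_apply, Finsupp.single_apply, Fin.succ_ne_zero]
  have hMμinj : ∀ e e', Mμ e = Mμ e' → e = e' := by
    intro e e' h
    have h2 : ∀ v, Mμ e v = Mμ e' v := fun v => by rw [h]
    have hrest : ∀ i' : Fin (p+1), i' ≠ 0 → e (Sum.inl i') = e' (Sum.inl i') := by
      intro i' hi'
      have := h2 (Sum.inl i')
      rwa [hMA _ _ hi', hMA _ _ hi'] at this
    funext l
    rcases l with i | j
    · by_cases hi0 : i = 0
      · subst hi0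
        have hB0 := h2 (Sum.inr 0)
        rw [hMB0, hMB0] at hB0
        rw [Fin.sum_univ_succ, Fin.sum_univ_succ] at hB0
        have htail : ∑ i : Fin p, e (Sum.inl i.succ) = ∑ i : Fin p, e' (Sum.inl i.succ) :=
          Finset.sum_congr rfl (fun i _ => hrest i.succ (Fin.succ_ne_zero i))
        omega
      · exact hrest i hi0
    · have := h2 (Sum.inr j.succ)
      rwa [hMBs, hMBs] at this
  have hdATμ : ∀ l, dA (Tμ l) = 1 := by
    intro l
    rcases l with i | j <;>
      simp [hTμdef, dA_add, dA_single_inl, dA_single_inr]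
  have hdBTμ : ∀ l, dB (Tμ l) = 1 := by
    intro l
    rcases l with i | j <;>
      simp [hTμdef, dB_add, dB_single_inl, dB_single_inr]
  have hdAMμ : ∀ e, dA (Mμ e) = ∑ l, e l := by
    intro e
    calc dA (Mμ e) = ∑ i, Mμ e (Sum.inl i) := rfl
      _ = ∑ i, ∑ l, e l * Tμ l (Sum.inl i) :=
          Finset.sum_congr rfl (fun i _ => hMμapp e _)
      _ = ∑ l, ∑ i, e l * Tμ l (Sum.inl i) := Finset.sum_comm
      _ = ∑ l, e l * dA (Tμ l) :=
          Finset.sum_congr rfl (fun l _ => by rw [← Finset.mul_sum]; rfl)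
      _ = ∑ l, e l := Finset.sum_congr rfl (fun l _ => by rw [hdATμ l, mul_one])
  have hdBMμ : ∀ e, dB (Mμ e) = ∑ l, e l := by
    intro e
    calc dB (Mμ e) = ∑ j, Mμ e (Sum.inr j) := rfl
      _ = ∑ j, ∑ l, e l * Tμ l (Sum.inr j) :=
          Finset.sum_congr rfl (fun j _ => hMμapp e _)
      _ = ∑ l, ∑ j, e l * Tμ l (Sum.inr j) := Finset.sum_comm
      _ = ∑ l, e l * dB (Tμ l) :=
          Finset.sum_congr rfl (fun l _ => by rw [← Finset.mul_sum]; rfl)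
      _ = ∑ l, e l := Finset.sum_congr rfl (fun l _ => by rw [hdBTμ l, mul_one])
  -- the finite spanning family
  set FF : ((ι → Fin (dK+1)) × ((Fin (p+1) ⊕ Fin (q+1)) → Fin (2*D+1))) →
      MvPolynomial (Fin (p+1) ⊕ Fin (q+1)) ℂ := fun z =>
    (∏ k, g k ^ ((z.1 k : ℕ))) *
      monomial (Finsupp.equivFunOnFinite.symm (fun v => ((z.2 v : ℕ)))) 1 with hFFdef
  have hGenSub : Gen dK ⊆ Set.range FF := by
    rintro s ⟨c, hc, μ0, hμ0, rfl⟩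
    refine ⟨(fun k => ⟨c k, by have := hc k; omega⟩, fun v => ⟨μ0 v, by have := hμ0 v; omega⟩), ?_⟩
    rw [hFFdef]
    have : Finsupp.equivFunOnFinite.symm (fun v => μ0 v) = μ0 :=
      Finsupp.equivFunOnFinite_symm_coe μ0
    simp only
    rw [this]
  have hSpSub : Sp dK ≤ Submodule.span ℂ (Set.range FF) := Submodule.span_mono hGenSub
  -- the linearly independent family
  set fam : ((Fin (p+1) ⊕ Fin q) → Fin K) → MvPolynomial (Fin (p+1) ⊕ Fin (q+1)) ℂ :=
    fun e => monomial (Mμ (fun l => ((e l : ℕ)))) 1 with hfamdef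
  have hfamInd : LinearIndependent ℂ fam := by
    have hcomp : fam = (⇑(MvPolynomial.basisMonomials (Fin (p+1) ⊕ Fin (q+1)) ℂ)) ∘
        (fun e : ((Fin (p+1) ⊕ Fin q) → Fin K) => Mμ (fun l => ((e l : ℕ)))) := by
      funext e
      rw [hfamdef]
      simp [MvPolynomial.coe_basisMonomials]
    rw [hcomp]
    apply (MvPolynomial.basisMonomials _ ℂ).linearIndependent.comp
    intro e e' h
    have h2 := hMμinj _ _ h
    funext l
    exact Fin.val_injective (congrFun h2 l)
  have hfamMem : ∀ e, fam e ∈ Submodule.span ℂ (Set.range FF) := by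
    intro e
    apply hSpSub
    have hsum : (∑ l, ((e l : ℕ))) ≤ dK := by
      calc ∑ l, ((e l : ℕ)) ≤ ∑ _l : (Fin (p+1) ⊕ Fin q), (K-1) :=
            Finset.sum_le_sum (fun l _ => by have := (e l).isLt; omega)
        _ = (p+1+q) * (K-1) := by
            rw [Finset.sum_const, Finset.card_univ, smul_eq_mul, Fintype.card_sum,
              Fintype.card_fin, Fintype.card_fin]
        _ ≤ dK := by
            rw [hdKdef]
            have h1 : p+1+q = p+q+1 := by omega
            rw [h1]
            exact Nat.mul_le_mul_left _ (by omega)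
    exact hSpMono hsum (lemA _ _ (hdAMμ _) (hdBMμ _))
  haveI : FiniteDimensional ℂ ↥(Submodule.span ℂ (Set.range FF)) :=
    FiniteDimensional.span_of_finite ℂ (Set.finite_range FF)
  have hcard1 : Fintype.card ((Fin (p+1) ⊕ Fin q) → Fin K)
      ≤ Module.finrank ℂ ↥(Submodule.span ℂ (Set.range FF)) := by
    have hfam2 : LinearIndependent ℂ (fun e => (⟨fam e, hfamMem e⟩ :
        ↥(Submodule.span ℂ (Set.range FF)))) := by
      apply LinearIndependent.of_comp (Submodule.span ℂ (Set.range FF)).subtype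
      exact hfamInd
    exact hfam2.fintype_card_le_finrank
  have hcard2 : Module.finrank ℂ ↥(Submodule.span ℂ (Set.range FF))
      ≤ Fintype.card ((ι → Fin (dK+1)) × ((Fin (p+1) ⊕ Fin (q+1)) → Fin (2*D+1))) := by
    refine le_trans (finrank_span_le_card (R := ℂ) (Set.range FF)) ?_
    rw [Set.toFinset_range]
    exact le_trans Finset.card_image_le (le_of_eq (by rw [Finset.card_univ]))
  have hKineq : K ^ (p+q+1) ≤ (dK+1) ^ (Fintype.card ι) * B := by
    have h0 : K ^ (p+q+1) = Fintype.card ((Fin (p+1) ⊕ Fin q) → Fin K) := by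
      rw [Fintype.card_fun, Fintype.card_sum, Fintype.card_fin, Fintype.card_fin,
        Fintype.card_fin]
      congr 1
      omega
    have h1 : Fintype.card ((ι → Fin (dK+1)) × ((Fin (p+1) ⊕ Fin (q+1)) → Fin (2*D+1)))
        = (dK+1) ^ (Fintype.card ι) * B := by
      rw [Fintype.card_prod, Fintype.card_fun, Fintype.card_fin, Fintype.card_fun,
        Fintype.card_fin, hBdef]
      congr 2
      rw [Fintype.card_sum, Fintype.card_fin, Fintype.card_fin]
      omega
    rw [h0, ← h1]
    exact le_trans hcard1 hcard2
  have hKbig : K ^ (p+q) * K ≤ K ^ (p+q) * ((p+q+2) ^ (p+q) * B) := by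
    have h1 : (dK+1) ^ (Fintype.card ι) ≤ (dK+1) ^ (p+q) :=
      Nat.pow_le_pow_right (by omega) hcard
    have h2 : dK + 1 ≤ (p+q+2) * K := by
      rw [hdKdef]
      calc (p+q+1) * K + 1 ≤ (p+q+1) * K + K := by omega
        _ = (p+q+2) * K := by ring
    calc K ^ (p+q) * K = K ^ (p+q+1) := by rw [pow_succ]
      _ ≤ (dK+1) ^ (Fintype.card ι) * B := hKineq
      _ ≤ (dK+1) ^ (p+q) * B := Nat.mul_le_mul_right _ h1
      _ ≤ ((p+q+2) * K) ^ (p+q) * B := Nat.mul_le_mul_right _ (Nat.pow_le_pow_left h2 _)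
      _ = K ^ (p+q) * ((p+q+2) ^ (p+q) * B) := by rw [mul_pow]; ring
  have hfinal : K ≤ (p+q+2) ^ (p+q) * B :=
    Nat.le_of_mul_le_mul_left hKbig (pow_pos (by omega) _)
  rw [hKdef] at hfinal
  omega


end SegreCore

end MvPart

section SegreExists
open MvPolynomial

theorem segre_exists {p q : ℕ} {ι : Type} [Fintype ι] [DecidableEq ι]
    (hcard : Fintype.card ι ≤ p + q)
    (g : ι → MvPolynomial (Fin (p+1) ⊕ Fin (q+1)) ℂ)
    (hg : ∀ k, g k ∈ Submodule.span ℂ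
      {s : MvPolynomial (Fin (p+1) ⊕ Fin (q+1)) ℂ | ∃ i j, s = X (Sum.inl i) * X (Sum.inr j)}) :
    ∃ x : (Fin (p+1) ⊕ Fin (q+1)) → ℂ, (∀ k, eval x (g k) = 0) ∧
      (∃ i, x (Sum.inl i) ≠ 0) ∧ (∃ j, x (Sum.inr j) ≠ 0) := by
  by_contra hcon
  push_neg at hcon
  apply segre_core hcard g hg
  intro x hx
  by_cases hA : ∃ i, x (Sum.inl i) ≠ 0
  · exact Or.inr (hcon x hx hA)
  · push_neg at hA
    exact Or.inl hA

end SegreExists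

section FrontEnd

open Polynomial

variable (p q : ℕ)

/-- extended `X`-variables (0 outside the index range) -/
noncomputable def XA (i : ℕ) : MvPolynomial (Fin (p+1) ⊕ Fin (q+1)) ℂ :=
  if h : i < p+1 then MvPolynomial.X (Sum.inl ⟨i, h⟩) else 0

noncomputable def XBv (j : ℕ) : MvPolynomial (Fin (p+1) ⊕ Fin (q+1)) ℂ :=
  if h : j < q+1 then MvPolynomial.X (Sum.inr ⟨j, h⟩) else 0

/-- the coefficient forms of the `W` map -/
noncomputable def Wmv (α : ℂ) (k : ℕ) : MvPolynomial (Fin (p+1) ⊕ Fin (q+1)) ℂ :=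
  ∑ ij ∈ Finset.HasAntidiagonal.antidiagonal k,
    MvPolynomial.C ((ij.1 : ℂ) - (ij.2 : ℂ) + α) * (XA p q ij.1 * XBv p q ij.2)

/-- candidate polynomials from a coefficient vector -/
noncomputable def Pa (x : (Fin (p+1) ⊕ Fin (q+1)) → ℂ) : Polynomial ℂ :=
  ∑ i : Fin (p+1), Polynomial.monomial (i : ℕ) (x (Sum.inl i))

noncomputable def Qb (x : (Fin (p+1) ⊕ Fin (q+1)) → ℂ) : Polynomial ℂ :=
  ∑ j : Fin (q+1), Polynomial.monomial (j : ℕ) (x (Sum.inr j))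

lemma coeff_Pa (x : (Fin (p+1) ⊕ Fin (q+1)) → ℂ) (m : ℕ) :
    (Pa p q x).coeff m = if h : m < p+1 then x (Sum.inl ⟨m, h⟩) else 0 := by
  rw [Pa, Polynomial.finset_sum_coeff]
  by_cases h : m < p+1
  · rw [dif_pos h]
    rw [Finset.sum_eq_single (⟨m, h⟩ : Fin (p+1))]
    · rw [Polynomial.coeff_monomial, if_pos rfl]
    · intro i _ hne
      rw [Polynomial.coeff_monomial, if_neg (fun hc => hne (Fin.ext hc))]
    · intro habs
      exact absurd (Finset.mem_univ _) habs
  · rw [dif_neg h]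
    apply Finset.sum_eq_zero
    intro i _
    rw [Polynomial.coeff_monomial, if_neg (fun hc => h (by rw [← hc]; exact i.isLt))]

lemma coeff_Qb (x : (Fin (p+1) ⊕ Fin (q+1)) → ℂ) (m : ℕ) :
    (Qb p q x).coeff m = if h : m < q+1 then x (Sum.inr ⟨m, h⟩) else 0 := by
  rw [Qb, Polynomial.finset_sum_coeff]
  by_cases h : m < q+1
  · rw [dif_pos h]
    rw [Finset.sum_eq_single (⟨m, h⟩ : Fin (q+1))]
    · rw [Polynomial.coeff_monomial, if_pos rfl]
    · intro i _ hne
      rw [Polynomial.coeff_monomial, if_neg (fun hc => hne (Fin.ext hc))]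
    · intro habs
      exact absurd (Finset.mem_univ _) habs
  · rw [dif_neg h]
    apply Finset.sum_eq_zero
    intro i _
    rw [Polynomial.coeff_monomial, if_neg (fun hc => h (by rw [← hc]; exact i.isLt))]

lemma eval_XA (x : (Fin (p+1) ⊕ Fin (q+1)) → ℂ) (i : ℕ) :
    MvPolynomial.eval x (XA p q i) = (Pa p q x).coeff i := by
  rw [XA, coeff_Pa]
  by_cases h : i < p+1
  · rw [dif_pos h, dif_pos h, MvPolynomial.eval_X]
  · rw [dif_neg h, dif_neg h, map_zero]

lemma eval_XBv (x : (Fin (p+1) ⊕ Fin (q+1)) → ℂ) (j : ℕ) :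
    MvPolynomial.eval x (XBv p q j) = (Qb p q x).coeff j := by
  rw [XBv, coeff_Qb]
  by_cases h : j < q+1
  · rw [dif_pos h, dif_pos h, MvPolynomial.eval_X]
  · rw [dif_neg h, dif_neg h, map_zero]

lemma eval_Wmv (α : ℂ) (x : (Fin (p+1) ⊕ Fin (q+1)) → ℂ) (k : ℕ) :
    MvPolynomial.eval x (Wmv p q α k)
      = (X * (derivative (Pa p q x) * (Qb p q x) - (Pa p q x) * derivative (Qb p q x))
          + C α * ((Pa p q x) * (Qb p q x))).coeff k := by
  rw [coeff_W, Wmv, map_sum]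
  apply Finset.sum_congr rfl
  intro ij _
  rw [map_mul, map_mul, MvPolynomial.eval_C, eval_XA, eval_XBv]

lemma natDegree_Pa_le (x : (Fin (p+1) ⊕ Fin (q+1)) → ℂ) : (Pa p q x).natDegree ≤ p := by
  apply Polynomial.natDegree_le_iff_coeff_eq_zero.mpr
  intro m hm
  rw [coeff_Pa, dif_neg (by omega)]

lemma natDegree_Qb_le (x : (Fin (p+1) ⊕ Fin (q+1)) → ℂ) : (Qb p q x).natDegree ≤ q := by
  apply Polynomial.natDegree_le_iff_coeff_eq_zero.mpr
  intro m hm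
  rw [coeff_Qb, dif_neg (by omega)]

lemma Wmv_mem_span (α : ℂ) (k : ℕ) :
    Wmv p q α k ∈ Submodule.span ℂ
      {s : MvPolynomial (Fin (p+1) ⊕ Fin (q+1)) ℂ |
        ∃ i j, s = MvPolynomial.X (Sum.inl i) * MvPolynomial.X (Sum.inr j)} := by
  apply Submodule.sum_mem
  intro ij _
  by_cases hi : ij.1 < p+1
  · by_cases hj : ij.2 < q+1
    · rw [XA, dif_pos hi, XBv, dif_pos hj, ← MvPolynomial.smul_eq_C_mul]
      exact Submodule.smul_mem _ _ (Submodule.subset_span ⟨⟨ij.1, hi⟩, ⟨ij.2, hj⟩, rfl⟩)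
    · rw [XBv, dif_neg hj, mul_zero, mul_zero]
      exact Submodule.zero_mem _
  · rw [XA, dif_neg hi, zero_mul, mul_zero]
    exact Submodule.zero_mem _

end FrontEnd

end WAlpha

open Polynomial

/-- Surjectivity of the map `W_α : (P,Q) ↦ z(P'Q - PQ') + αPQ`, viewed
projectively: for `α ∈ (0,1)` and any nonzero complex polynomial `R` of degree
at most `p + q` there are nonzero polynomials `P`, `Q` of degrees at most
`p`, `q` with `z(P'Q - PQ') + αPQ = c·R` for some nonzero constant `c`. -/
theorem W_alpha_surjective (p q : ℕ) (α : ℝ) (hα : α ∈ Set.Ioo (0 : ℝ) 1)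
    (R : Polynomial ℂ) (hR : R ≠ 0) (hdeg : R.natDegree ≤ p + q) :
    ∃ (P Q : Polynomial ℂ) (c : ℂ), P ≠ 0 ∧ Q ≠ 0 ∧ c ≠ 0 ∧
      P.natDegree ≤ p ∧ Q.natDegree ≤ q ∧
      X * (derivative P * Q - P * derivative Q) + C (α : ℂ) * (P * Q) = C c * R := by
  classical
  obtain ⟨hα0, hα1⟩ := hα
  set k₀ : ℕ := R.natDegree with hk₀def
  have hRk0 : R.coeff k₀ ≠ 0 := by
    have h := Polynomial.leadingCoeff_ne_zero.mpr hR
    rwa [Polynomial.leadingCoeff] at h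
  have hk₀le : k₀ ≤ p + q := hdeg
  set k₀f : Fin (p+q+1) := ⟨k₀, by omega⟩ with hk₀fdef
  have hcard : Fintype.card {k : Fin (p+q+1) // k ≠ k₀f} ≤ p + q := by
    have h1 : Fintype.card {k : Fin (p+q+1) // k ≠ k₀f}
        = Fintype.card (Fin (p+q+1)) - 1 := by
      rw [Fintype.card_subtype_compl, Fintype.card_subtype_eq]
    rw [h1, Fintype.card_fin]
    omega
  set g : {k : Fin (p+q+1) // k ≠ k₀f} → MvPolynomial (Fin (p+1) ⊕ Fin (q+1)) ℂ := fun k =>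
    MvPolynomial.C (R.coeff k₀) * WAlpha.Wmv p q (α : ℂ) ((k : Fin (p+q+1)) : ℕ)
      - MvPolynomial.C (R.coeff ((k : Fin (p+q+1)) : ℕ)) * WAlpha.Wmv p q (α : ℂ) k₀
    with hgdef
  have hgspan : ∀ k, g k ∈ Submodule.span ℂ
      {s : MvPolynomial (Fin (p+1) ⊕ Fin (q+1)) ℂ |
        ∃ i j, s = MvPolynomial.X (Sum.inl i) * MvPolynomial.X (Sum.inr j)} := by
    intro k
    rw [hgdef]
    apply Submodule.sub_mem
    · rw [← MvPolynomial.smul_eq_C_mul]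
      exact Submodule.smul_mem _ _ (WAlpha.Wmv_mem_span p q _ _)
    · rw [← MvPolynomial.smul_eq_C_mul]
      exact Submodule.smul_mem _ _ (WAlpha.Wmv_mem_span p q _ _)
  obtain ⟨x, hx0, ⟨i0, hi0⟩, ⟨j0, hj0⟩⟩ := WAlpha.segre_exists hcard g hgspan
  set P : Polynomial ℂ := WAlpha.Pa p q x with hPdef
  set Q : Polynomial ℂ := WAlpha.Qb p q x with hQdef
  set W : Polynomial ℂ :=
    X * (derivative P * Q - P * derivative Q) + C (α : ℂ) * (P * Q) with hWdef
  have hP : P ≠ 0 := by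
    intro h
    have hc := WAlpha.coeff_Pa p q x (i0 : ℕ)
    rw [← hPdef, h, Polynomial.coeff_zero] at hc
    rw [dif_pos i0.isLt, Fin.eta] at hc
    exact hi0 hc.symm
  have hQ : Q ≠ 0 := by
    intro h
    have hc := WAlpha.coeff_Qb p q x (j0 : ℕ)
    rw [← hQdef, h, Polynomial.coeff_zero] at hc
    rw [dif_pos j0.isLt, Fin.eta] at hc
    exact hj0 hc.symm
  have hrel : ∀ k : ℕ, k ≤ p + q →
      R.coeff k₀ * W.coeff k = R.coeff k * W.coeff k₀ := by
    intro k hk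
    by_cases hkk : k = k₀
    · rw [hkk]
    · have hkf : (⟨k, by omega⟩ : Fin (p+q+1)) ≠ k₀f := by
        intro hc
        have h2 : k = k₀ := by
          have h3 := congrArg (fun z : Fin (p+q+1) => (z : ℕ)) hc
          simpa using h3
        exact hkk h2
      have h0 := hx0 ⟨⟨k, by omega⟩, hkf⟩
      rw [hgdef] at h0
      simp only [map_sub, map_mul, MvPolynomial.eval_C] at h0
      rw [WAlpha.eval_Wmv, WAlpha.eval_Wmv] at h0
      rw [← hPdef, ← hQdef, ← hWdef] at h0
      exact sub_eq_zero.mp h0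
  have hWhigh : ∀ k : ℕ, p + q < k → W.coeff k = 0 := by
    intro k hk
    rw [hWdef, WAlpha.coeff_W]
    apply Finset.sum_eq_zero
    intro ij hij
    rw [Finset.HasAntidiagonal.mem_antidiagonal] at hij
    by_cases h1 : ij.1 < p + 1
    · have h2 : ¬ (ij.2 < q+1) := by omega
      have hz : Q.coeff ij.2 = 0 := by
        rw [hQdef, WAlpha.coeff_Qb, dif_neg h2]
      rw [hz]; ring
    · have hz : P.coeff ij.1 = 0 := by
        rw [hPdef, WAlpha.coeff_Pa, dif_neg h1]
      rw [hz]; ring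
  set c : ℂ := W.coeff k₀ / R.coeff k₀ with hcdef
  have hWR : W = C c * R := by
    ext k
    rw [Polynomial.coeff_C_mul]
    by_cases hk : k ≤ p + q
    · have h := hrel k hk
      rw [hcdef]
      field_simp
      linear_combination h
    · rw [hWhigh k (by omega),
        Polynomial.coeff_eq_zero_of_natDegree_lt (lt_of_le_of_lt hdeg (by omega)), mul_zero]
  have hc0 : c ≠ 0 := by
    intro h
    have hW0 : W = 0 := by rw [hWR, h, map_zero, zero_mul]
    exact WAlpha.W_ne_zero hα0 hα1 hP hQ (by rw [← hWdef]; exact hW0)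
  refine ⟨P, Q, c, hP, hQ, hc0, ?_, ?_, ?_⟩
  · rw [hPdef]; exact WAlpha.natDegree_Pa_le p q x
  · rw [hQdef]; exact WAlpha.natDegree_Qb_le p q x
  · rw [← hWdef]; exact hWR
end

section
/- Let m be a positive integer. The number of chord diagrams in the upper half-plane, symmetric with respect to reflection z ↦ -z̄, with m vertices of degree 1 on the positive real ray (and their m mirror images on the negative ray), no vertices at 0 or ∞, equals the central binomial coefficient C(m, ⌊m/2⌋). -/
set_option linter.unusedVariables false
set_option linter.unreachableTactic false
set_option linter.unusedTactic false

namespace SymMatch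

def wstep {n : ℕ} (w : Fin n → Bool) (i : ℕ) : ℤ :=
  if h : i < n then (if w ⟨i, h⟩ then 1 else -1) else 0

def wht {n : ℕ} (w : Fin n → Bool) (x : ℕ) : ℤ :=
  ∑ i ∈ Finset.range x, wstep w i

lemma wht_succ {n : ℕ} (w : Fin n → Bool) (x : ℕ) :
    wht w (x + 1) = wht w x + wstep w x := Finset.sum_range_succ _ _

@[simp] lemma wht_zero {n : ℕ} (w : Fin n → Bool) : wht w 0 = 0 := by simp [wht]

lemma wstep_cases {n : ℕ} (w : Fin n → Bool) {i : ℕ} (h : i < n) :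
    wstep w i = 1 ∨ wstep w i = -1 := by
  unfold wstep; rw [dif_pos h]; by_cases hw : w ⟨i, h⟩ <;> simp [hw]

lemma wstep_true {n : ℕ} (w : Fin n → Bool) {i : ℕ} (h : i < n) (hw : w ⟨i, h⟩ = true) :
    wstep w i = 1 := by unfold wstep; rw [dif_pos h, hw]; rfl

lemma wstep_false {n : ℕ} (w : Fin n → Bool) {i : ℕ} (h : i < n) (hw : w ⟨i, h⟩ = false) :
    wstep w i = -1 := by unfold wstep; rw [dif_pos h, hw]; rfl

lemma wht_diff {n : ℕ} (w : Fin n → Bool) {a b : ℕ} (hab : a ≤ b) :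
    wht w b - wht w a = ∑ i ∈ Finset.Ico a b, wstep w i := by
  rw [Finset.sum_Ico_eq_sub _ hab]; rfl

-- cons lemmas
lemma wstep_cons_zero {m : ℕ} (b : Bool) (v : Fin m → Bool) :
    wstep (Fin.cons b v) 0 = if b then 1 else -1 := by
  unfold wstep
  rw [dif_pos (Nat.succ_pos m)]
  rfl

lemma wstep_cons_succ {m : ℕ} (b : Bool) (v : Fin m → Bool) (i : ℕ) :
    wstep (Fin.cons b v) (i + 1) = wstep v i := by
  unfold wstep
  by_cases h : i < m
  · rw [dif_pos (by omega : i + 1 < m + 1), dif_pos h]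
    have h2 : (⟨i + 1, by omega⟩ : Fin (m+1)) = (⟨i, h⟩ : Fin m).succ := rfl
    rw [h2, Fin.cons_succ]
  · rw [dif_neg (by omega), dif_neg h]

lemma wht_cons {m : ℕ} (b : Bool) (v : Fin m → Bool) (x : ℕ) :
    wht (Fin.cons b v) (x + 1) = (if b then 1 else -1) + wht v x := by
  unfold wht
  rw [Finset.sum_range_succ']
  simp only [wstep_cons_succ, wstep_cons_zero]
  ring

/-- Words of length `m` whose height, started from `k`, stays nonnegative. -/
def Lst (k m : ℕ) : Type :=
  {v : Fin m → Bool // ∀ x, 0 ≤ (k : ℤ) + wht v x}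

instance (k m : ℕ) : Finite (Lst k m) := by unfold Lst; infer_instance

def lstNil (k : ℕ) : Lst k 0 :=
  ⟨Fin.elim0, fun x => by
    have : wht (Fin.elim0 : Fin 0 → Bool) x = 0 := by
      unfold wht
      refine Finset.sum_eq_zero fun i _ => ?_
      unfold wstep
      rw [dif_neg (by omega)]
    rw [this]; positivity⟩

instance (k : ℕ) : Unique (Lst k 0) where
  default := lstNil k
  uniq := fun v => Subtype.ext (funext fun i => i.elim0)

lemma card_lst_zero (k : ℕ) : Nat.card (Lst k 0) = 1 := Nat.card_unique

lemma lst_cond_cons_true {k m : ℕ} (v : Fin m → Bool) :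
    (∀ x, 0 ≤ (k : ℤ) + wht (Fin.cons true v) x) ↔ (∀ x, 0 ≤ (k + 1 : ℕ) + wht v x) := by
  constructor
  · intro h x
    have := h (x + 1)
    rw [wht_cons] at this
    simp only [if_true, if_neg (Bool.false_ne_true)] at this
    push_cast at this ⊢
    linarith
  · intro h x
    match x with
    | 0 => simp [wht]
    | x + 1 =>
      have := h x
      rw [wht_cons]
      simp only [if_true, if_neg (Bool.false_ne_true)]
      push_cast at this ⊢
      linarith

lemma lst_cond_cons_false {k m : ℕ} (v : Fin m → Bool) :
    (∀ x, 0 ≤ (k + 1 : ℕ) + wht (Fin.cons false v) x) ↔ (∀ x, 0 ≤ (k : ℤ) + wht v x) := by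
  constructor
  · intro h x
    have := h (x + 1)
    rw [wht_cons] at this
    simp only [if_true, if_neg (Bool.false_ne_true)] at this
    push_cast at this ⊢
    linarith
  · intro h x
    match x with
    | 0 => simp [wht]; positivity
    | x + 1 =>
      have := h x
      rw [wht_cons]
      simp only [if_true, if_neg (Bool.false_ne_true)]
      push_cast at this ⊢
      linarith

lemma lst_cond_cons_false_zero {m : ℕ} (v : Fin m → Bool) :
    ¬ (∀ x, 0 ≤ (0 : ℤ) + wht (Fin.cons false v) x) := by
  intro h
  have := h 1
  rw [wht_cons] at this
  simp [wht] at this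

/-- Splitting off the first letter, `k = 0` case: it must be `true`. -/
noncomputable def eCons0 (m : ℕ) : Lst 0 (m + 1) ≃ Lst 1 m where
  toFun := fun ⟨v, hv⟩ => ⟨Fin.tail v, by
    have hc : v = Fin.cons (v 0) (Fin.tail v) := (Fin.cons_self_tail v).symm
    have h0 : v 0 = true := by
      by_contra h
      have : v 0 = false := by simpa using h
      rw [hc, this] at hv
      exact lst_cond_cons_false_zero _ (by exact_mod_cast hv)
    rw [hc, h0] at hv
    exact_mod_cast (lst_cond_cons_true _).1 (by exact_mod_cast hv)⟩
  invFun := fun ⟨v, hv⟩ => ⟨Fin.cons true v, by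
    exact_mod_cast (lst_cond_cons_true _).2 (by exact_mod_cast hv)⟩
  left_inv := fun ⟨v, hv⟩ => by
    have h0 : v 0 = true := by
      by_contra h
      have hfa : v 0 = false := by simpa using h
      have hc : v = Fin.cons (v 0) (Fin.tail v) := (Fin.cons_self_tail v).symm
      rw [hc, hfa] at hv
      exact lst_cond_cons_false_zero _ (by exact_mod_cast hv)
    exact Subtype.ext (by simp [Fin.tail]; rw [← h0]; exact Fin.cons_self_tail v)
  right_inv := fun ⟨v, hv⟩ => Subtype.ext (by simp)

/-- Splitting off the first letter, `k + 1` case. -/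
noncomputable def eConsS (k m : ℕ) : Lst (k + 1) (m + 1) ≃ Lst (k + 2) m ⊕ Lst k m where
  toFun := fun ⟨v, hv⟩ =>
    if h0 : v 0 = true then
      Sum.inl ⟨Fin.tail v, by
        have hc : v = Fin.cons (v 0) (Fin.tail v) := (Fin.cons_self_tail v).symm
        rw [hc, h0] at hv
        exact_mod_cast (lst_cond_cons_true _).1 (by exact_mod_cast hv)⟩
    else
      Sum.inr ⟨Fin.tail v, by
        have hf : v 0 = false := by simpa using h0
        have hc : v = Fin.cons (v 0) (Fin.tail v) := (Fin.cons_self_tail v).symm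
        rw [hc, hf] at hv
        exact (lst_cond_cons_false _).1 (by exact_mod_cast hv)⟩
  invFun := fun s => match s with
    | Sum.inl ⟨v, hv⟩ => ⟨Fin.cons true v, by
        exact_mod_cast (lst_cond_cons_true _).2 (by exact_mod_cast hv)⟩
    | Sum.inr ⟨v, hv⟩ => ⟨Fin.cons false v, by
        exact_mod_cast (lst_cond_cons_false _).2 hv⟩
  left_inv := fun ⟨v, hv⟩ => by
    by_cases h0 : v 0 = true
    · simp only [dif_pos h0]
      exact Subtype.ext (by simp [← h0, Fin.cons_self_tail])
    · simp only [dif_neg h0]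
      have hf : v 0 = false := by simpa using h0
      exact Subtype.ext (by simp [← hf, Fin.cons_self_tail])
  right_inv := fun s => by
    match s with
    | Sum.inl ⟨v, hv⟩ => simp
    | Sum.inr ⟨v, hv⟩ => simp

/-- Closed form for the number of nonnegative paths of length `m` starting at height `k`. -/
def F (m k : ℕ) : ℕ := ∑ j ∈ Finset.range (k + 1), m.choose ((m - k) / 2 + j)

lemma F_zero_left (k : ℕ) : F 0 k = 1 := by
  unfold F
  rw [Finset.sum_eq_single 0]
  · simp
  · intro j _ hj
    exact Nat.choose_eq_zero_of_lt (by omega)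
  · simp

lemma F_big (m k : ℕ) (h : m ≤ k) : F m k = 2 ^ m := by
  unfold F
  rw [Nat.sub_eq_zero_of_le h]
  simp only [Nat.zero_div, Nat.zero_add]
  rw [← Nat.sum_range_choose m]
  symm
  apply Finset.sum_subset
  · exact Finset.range_subset_range.2 (by omega)
  · intro j _ hj
    simp only [Finset.mem_range, not_lt] at hj
    exact Nat.choose_eq_zero_of_lt (by omega)

lemma F_zero_right (m : ℕ) : F m 0 = m.choose (m / 2) := by
  unfold F; simp

lemma F_rec_zero (m : ℕ) : F (m + 1) 0 = F m 1 := by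
  rcases Nat.eq_zero_or_pos m with rfl | hm
  · simp [F_zero_right, F_big]
  unfold F
  rw [Finset.sum_range_succ, Finset.sum_range_succ, Finset.sum_range_one, Finset.sum_range_zero]
  have h1 : (m + 1 - 0) / 2 = (m - 1) / 2 + 1 := by omega
  rw [h1]
  simp [Nat.choose_succ_succ]

lemma F_rec_succ (m k : ℕ) : F (m + 1) (k + 1) = F m (k + 2) + F m k := by
  rcases le_or_gt m k with h | h
  · rw [F_big _ _ (by omega), F_big _ _ (by omega), F_big _ _ (by omega)]
    ring
  rcases eq_or_lt_of_le (show k + 1 ≤ m from h) with rfl | h2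
  · -- m = k + 1
    rw [F_big (k + 1) (k + 2) (by omega)]
    unfold F
    have e1 : (k + 1 + 1 - (k + 1)) / 2 = 0 := by omega
    have e2 : (k + 1 - k) / 2 = 0 := by omega
    rw [e1, e2]
    simp only [Nat.zero_add]
    have hL : ∑ j ∈ Finset.range (k + 2), (k + 2).choose j = 2 ^ (k + 2) - (k+2).choose (k+2) := by
      have := Nat.sum_range_choose (k + 2)
      rw [Finset.sum_range_succ] at this
      omega
    have hR : ∑ j ∈ Finset.range (k + 1), (k + 1).choose j = 2 ^ (k + 1) - (k+1).choose (k+1) := by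
      have := Nat.sum_range_choose (k + 1)
      rw [Finset.sum_range_succ] at this
      omega
    rw [hL, hR]
    simp only [Nat.choose_self]
    have : 0 < 2 ^ (k+1) := Nat.pow_pos (by norm_num)
    have h2 : (2:ℕ) ^ (k+2) = 2 ^ (k+1) + 2^(k+1) := by ring
    omega
  · -- k + 2 ≤ m
    unfold F
    set t := (m - k) / 2 with ht
    have htpos : 1 ≤ t := by omega
    have e1 : (m + 1 - (k + 1)) / 2 = t := by omega
    have e2 : (m - (k + 2)) / 2 = t - 1 := by omega
    rw [e1, e2]
    have pascal : ∀ j, (m+1).choose (t + j) = m.choose (t - 1 + j) + m.choose (t + j) := by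
      intro j
      have h4 : t + j = (t - 1 + j) + 1 := by omega
      rw [h4, Nat.choose_succ_succ]
    calc ∑ j ∈ Finset.range (k + 2), (m+1).choose (t + j)
        = ∑ j ∈ Finset.range (k + 2), (m.choose (t - 1 + j) + m.choose (t + j)) := by
          exact Finset.sum_congr rfl (fun j _ => pascal j)
      _ = ∑ j ∈ Finset.range (k + 2), m.choose (t - 1 + j)
            + ∑ j ∈ Finset.range (k + 2), m.choose (t + j) := Finset.sum_add_distrib
      _ = ∑ j ∈ Finset.range (k + 3), m.choose (t - 1 + j)
            + ∑ j ∈ Finset.range (k + 1), m.choose (t + j) := by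
          rw [Finset.sum_range_succ (fun j => m.choose (t - 1 + j)) (k+2),
              Finset.sum_range_succ (fun j => m.choose (t + j)) (k+1)]
          have : t - 1 + (k + 2) = t + (k + 1) := by omega
          rw [this]
          ring

lemma card_lst (m : ℕ) : ∀ k, Nat.card (Lst k m) = F m k := by
  induction m with
  | zero => intro k; rw [card_lst_zero, F_zero_left]
  | succ m ih =>
    intro k
    match k with
    | 0 =>
      rw [Nat.card_congr (eCons0 m), ih 1, F_rec_zero]
    | k + 1 =>
      rw [Nat.card_congr (eConsS k m), Nat.card_sum, ih (k+2), ih k, F_rec_succ]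

/-! ### Discrete intermediate value theorem -/

lemma exists_hit_aux (f : ℕ → ℤ) (c : ℤ) :
    ∀ (k a : ℕ), (∀ x, a ≤ x → x < a + k → f (x+1) = f x + 1 ∨ f (x+1) = f x - 1) →
    c ≤ f a → f (a + k) ≤ c → ∃ x, a ≤ x ∧ x ≤ a + k ∧ f x = c := by
  intro k
  induction k with
  | zero => intro a _ h1 h2; exact ⟨a, le_refl a, by omega, le_antisymm (by simpa using h2) h1⟩
  | succ k ih =>
    intro a hstep h1 h2
    by_cases hc : f a = c
    · exact ⟨a, le_refl a, by omega, hc⟩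
    · have h3 : c + 1 ≤ f a := by omega
      have h4 : c ≤ f (a + 1) := by
        rcases hstep a (le_refl a) (by omega) with h | h <;> omega
      have h5 : f (a + 1 + k) ≤ c := by
        have : a + 1 + k = a + (k + 1) := by omega
        rw [this]; exact h2
      obtain ⟨x, hx1, hx2, hx3⟩ := ih (a + 1) (fun x h1 h2 => hstep x (by omega) (by omega)) h4 h5
      exact ⟨x, by omega, by omega, hx3⟩

lemma exists_hit (f : ℕ → ℤ) (c : ℤ) {a b : ℕ} (hab : a ≤ b)
    (hstep : ∀ x, a ≤ x → x < b → f (x+1) = f x + 1 ∨ f (x+1) = f x - 1)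
    (h1 : c ≤ f a) (h2 : f b ≤ c) : ∃ x, a ≤ x ∧ x ≤ b ∧ f x = c := by
  have hb : b = a + (b - a) := by omega
  obtain ⟨x, hx1, hx2, hx3⟩ := exists_hit_aux f c (b - a) a
    (fun x u v => hstep x u (by omega)) h1 (by rw [← hb]; exact h2)
  exact ⟨x, hx1, by omega, hx3⟩

/-! ### Symmetric words -/

section Symmetric

variable {m : ℕ} {w : Fin (2 * m) → Bool}

lemma wstep_rev (hs : ∀ i, w (Fin.rev i) = !(w i)) {j : ℕ} (hj : j < 2 * m) :
    wstep w (2 * m - 1 - j) = - wstep w j := by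
  have h2 : 2 * m - 1 - j < 2 * m := by omega
  have hrev : (⟨2 * m - 1 - j, h2⟩ : Fin (2 * m)) = Fin.rev ⟨j, hj⟩ := by
    apply Fin.ext
    simp [Fin.val_rev]
    omega
  rw [wstep, wstep, dif_pos h2, dif_pos hj, hrev, hs ⟨j, hj⟩]
  by_cases hw : w ⟨j, hj⟩ <;> simp [hw]

lemma wht_rev_aux (hs : ∀ i, w (Fin.rev i) = !(w i)) {x : ℕ} (hx : x ≤ 2 * m) :
    wht w (2 * m) - wht w (2 * m - x) = - wht w x := by
  rw [wht_diff w (by omega : 2 * m - x ≤ 2 * m)]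
  have : ∑ i ∈ Finset.Ico (2 * m - x) (2 * m), wstep w i
      = ∑ j ∈ Finset.range x, wstep w (2 * m - 1 - j) := by
    apply Finset.sum_nbij' (fun i => 2 * m - 1 - i) (fun j => 2 * m - 1 - j)
    · intro i hi
      simp only [Finset.mem_Ico] at hi
      simp only [Finset.mem_range]
      omega
    · intro j hj
      simp only [Finset.mem_range] at hj
      simp only [Finset.mem_Ico]
      omega
    · intro i hi
      simp only [Finset.mem_Ico] at hi
      omega
    · intro j hj
      simp only [Finset.mem_range] at hj
      omega
    · intro i hi
      simp only [Finset.mem_Ico] at hi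
      congr 1
      omega
  rw [this]
  have h2 : ∑ j ∈ Finset.range x, wstep w (2 * m - 1 - j)
      = ∑ j ∈ Finset.range x, - wstep w j := by
    apply Finset.sum_congr rfl
    intro j hj
    simp only [Finset.mem_range] at hj
    exact wstep_rev hs (by omega)
  rw [h2, wht, Finset.sum_neg_distrib]

lemma wht_total (hs : ∀ i, w (Fin.rev i) = !(w i)) : wht w (2 * m) = 0 := by
  have h1 := wht_rev_aux hs (le_refl (2 * m))
  rw [Nat.sub_self, wht_zero] at h1
  omega

lemma wht_rev (hs : ∀ i, w (Fin.rev i) = !(w i)) {x : ℕ} (hx : x ≤ 2 * m) :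
    wht w (2 * m - x) = wht w x := by
  have h1 := wht_rev_aux hs hx
  have h2 := wht_total hs
  omega

lemma wht_stable {n : ℕ} (w : Fin n → Bool) {x : ℕ} (hx : n ≤ x) :
    wht w x = wht w n := by
  induction x with
  | zero => have h0 : n = 0 := by omega
            subst h0; rfl
  | succ x ih =>
    rcases Nat.lt_or_ge n (x + 1) with h | h
    · have hxn : n ≤ x := by omega
      rw [wht_succ, ih hxn, wstep, dif_neg (by omega)]
      ring
    · have h0 : n = x + 1 := by omega
      subst h0; rfl

end Symmetric

/-! ### The matching determined by a symmetric nonnegative word -/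

open scoped Classical in
/-- The partner of an opening position `i`: the least `j > i` at which the height
returns to its value at `i`. -/
noncomputable def pO {n : ℕ} (w : Fin n → Bool) (i : ℕ) : ℕ :=
  if h : ∃ j, i < j ∧ j < n ∧ wht w (j + 1) = wht w i then Nat.find h else 0

section Matching

variable {m : ℕ} {w : Fin (2 * m) → Bool}

lemma pO_exists (hs : ∀ i, w (Fin.rev i) = !(w i)) (hp : ∀ x, 0 ≤ wht w x)
    {i : ℕ} (hi : i < 2 * m) (hop : w ⟨i, hi⟩ = true) :
    ∃ j, i < j ∧ j < 2 * m ∧ wht w (j + 1) = wht w i := by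
  have h1 : wht w i ≤ wht w (i + 1) := by
    rw [wht_succ, wstep_true w hi hop]; omega
  have h2 : wht w (2 * m) ≤ wht w i := by
    rw [wht_total hs]; exact hp i
  obtain ⟨x, hx1, hx2, hx3⟩ := exists_hit (wht w) (wht w i) (by omega : i + 1 ≤ 2 * m)
    (fun x h1 h2 => by
      rcases wstep_cases w (show x < 2 * m by omega) with h | h <;>
        rw [wht_succ, h] <;> [left; right] <;> ring) h1 h2
  have hxne : x ≠ i + 1 := by
    intro h; rw [h, wht_succ, wstep_true w hi hop] at hx3; omega
  exact ⟨x - 1, by omega, by omega, by rw [show x - 1 + 1 = x by omega]; exact hx3⟩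

lemma pO_spec (hs : ∀ i, w (Fin.rev i) = !(w i)) (hp : ∀ x, 0 ≤ wht w x)
    {i : ℕ} (hi : i < 2 * m) (hop : w ⟨i, hi⟩ = true) :
    i < pO w i ∧ pO w i < 2 * m ∧ wht w (pO w i + 1) = wht w i := by
  rw [pO, dif_pos (pO_exists hs hp hi hop)]
  exact Nat.find_spec (pO_exists hs hp hi hop)

lemma pO_min (hs : ∀ i, w (Fin.rev i) = !(w i)) (hp : ∀ x, 0 ≤ wht w x)
    {i : ℕ} (hi : i < 2 * m) (hop : w ⟨i, hi⟩ = true)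
    {j : ℕ} (hj : j < pO w i) : ¬(i < j ∧ j < 2 * m ∧ wht w (j + 1) = wht w i) := by
  rw [pO, dif_pos (pO_exists hs hp hi hop)] at hj
  exact Nat.find_min (pO_exists hs hp hi hop) hj

lemma pO_le (hs : ∀ i, w (Fin.rev i) = !(w i)) (hp : ∀ x, 0 ≤ wht w x)
    {i : ℕ} (hi : i < 2 * m) (hop : w ⟨i, hi⟩ = true)
    {j : ℕ} (hj : i < j ∧ j < 2 * m ∧ wht w (j + 1) = wht w i) : pO w i ≤ j := by
  rw [pO, dif_pos (pO_exists hs hp hi hop)]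
  exact Nat.find_le hj

lemma pO_above (hs : ∀ i, w (Fin.rev i) = !(w i)) (hp : ∀ x, 0 ≤ wht w x)
    {i : ℕ} (hi : i < 2 * m) (hop : w ⟨i, hi⟩ = true)
    {y : ℕ} (h1 : i < y) (h2 : y ≤ pO w i) : wht w i < wht w y := by
  have key : ∀ y, i + 1 ≤ y → y ≤ pO w i → wht w i < wht w y := by
    intro y hy
    induction y, hy using Nat.le_induction with
    | base =>
      intro _
      rw [wht_succ, wstep_true w hi hop]
      omega
    | succ y hy ih =>
      intro hle
      have hylt : y < pO w i := by omega
      have h3 := ih (by omega)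
      have hyn : y < 2 * m := by
        have := (pO_spec hs hp hi hop).2.1
        omega
      have hne : wht w (y + 1) ≠ wht w i := by
        intro hcon
        exact pO_min hs hp hi hop hylt ⟨by omega, hyn, hcon⟩
      rcases wstep_cases w hyn with h | h <;> rw [wht_succ, h] <;> rw [wht_succ, h] at hne <;> omega
  exact key y (by omega) h2

lemma pO_closer (hs : ∀ i, w (Fin.rev i) = !(w i)) (hp : ∀ x, 0 ≤ wht w x)
    {i : ℕ} (hi : i < 2 * m) (hop : w ⟨i, hi⟩ = true) :
    w ⟨pO w i, (pO_spec hs hp hi hop).2.1⟩ = false := by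
  obtain ⟨ha, hb, hc⟩ := pO_spec hs hp hi hop
  have h1 : wht w i < wht w (pO w i) := pO_above hs hp hi hop ha (le_refl _)
  by_cases hw : w ⟨pO w i, hb⟩ = true
  · exfalso
    rw [wht_succ, wstep_true w hb hw] at hc
    omega
  · simpa using hw

lemma pO_rev (hs : ∀ i, w (Fin.rev i) = !(w i)) (hp : ∀ x, 0 ≤ wht w x)
    {i : ℕ} (hi : i < 2 * m) (hop : w ⟨i, hi⟩ = true) :
    pO w (2 * m - 1 - pO w i) = 2 * m - 1 - i := by
  obtain ⟨ha, hb, hc⟩ := pO_spec hs hp hi hop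
  set j := pO w i with hj
  have han : 2 * m - 1 - j < 2 * m := by omega
  have hrev : (⟨2 * m - 1 - j, han⟩ : Fin (2 * m)) = Fin.rev ⟨j, hb⟩ := by
    apply Fin.ext; simp [Fin.val_rev]; omega
  have haop : w ⟨2 * m - 1 - j, han⟩ = true := by
    rw [hrev, hs ⟨j, hb⟩, pO_closer hs hp hi hop]
    rfl
  have hex := pO_exists hs hp han haop
  rw [pO, dif_pos hex]
  rw [Nat.find_eq_iff hex]
  have hwa : wht w (2 * m - 1 - j) = wht w i := by
    have e1 : 2 * m - 1 - j = 2 * m - (j + 1) := by omega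
    rw [e1, wht_rev hs (by omega : j + 1 ≤ 2 * m), hc]
  constructor
  · refine ⟨by omega, by omega, ?_⟩
    have e2 : 2 * m - 1 - i + 1 = 2 * m - i := by omega
    rw [e2, wht_rev hs (by omega : i ≤ 2 * m), hwa]
  · rintro x hx ⟨h1, h2, h3⟩
    set y := 2 * m - (x + 1) with hy
    have hy1 : i < y := by omega
    have hy2 : y < j := by omega
    have h4 : wht w (x + 1) = wht w y := by
      have e3 : x + 1 = 2 * m - y := by omega
      rw [e3, wht_rev hs (by omega : y ≤ 2 * m)]
    have h5 : wht w i < wht w y := pO_above hs hp hi hop hy1 (by omega)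
    rw [h4, hwa] at h3
    omega

/-- The matching of a symmetric nonnegative word, as a function. -/
noncomputable def fmap (hs : ∀ i, w (Fin.rev i) = !(w i)) (hp : ∀ x, 0 ≤ wht w x) :
    Fin (2 * m) → Fin (2 * m) := fun i =>
  if h : w i = true then
    ⟨pO w i.val, (pO_spec hs hp i.isLt (by rw [Fin.eta]; exact h)).2.1⟩
  else
    Fin.rev ⟨pO w (Fin.rev i).val, (pO_spec hs hp (Fin.rev i).isLt
      (by rw [Fin.eta, hs i]; simp only [Bool.not_eq_true] at h; rw [h]; rfl)).2.1⟩

lemma rev_opener (hs : ∀ i, w (Fin.rev i) = !(w i)) {i : Fin (2 * m)} (h : w i = false) :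
    w (Fin.rev i) = true := by
  rw [hs i, h]; rfl

variable (hs : ∀ i, w (Fin.rev i) = !(w i)) (hp : ∀ x, 0 ≤ wht w x)

lemma fmap_opener {i : Fin (2 * m)} (h : w i = true) :
    (fmap hs hp i).val = pO w i.val := by
  rw [fmap, dif_pos h]

lemma opener_mk {i : Fin (2 * m)} (h : w i = true) : w ⟨i.val, i.isLt⟩ = true := by
  rw [Fin.eta]; exact h

lemma fmap_closer {i : Fin (2 * m)} (h : w i = false) :
    (fmap hs hp i).val = 2 * m - 1 - pO w (Fin.rev i).val := by
  rw [fmap, dif_neg (by rw [h]; simp)]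
  rw [Fin.val_rev]
  simp only []
  omega

lemma fmap_opener_lt {i : Fin (2 * m)} (h : w i = true) : i.val < (fmap hs hp i).val := by
  rw [fmap_opener hs hp h]
  exact (pO_spec hs hp i.isLt (opener_mk h)).1

lemma fmap_closer_lt {i : Fin (2 * m)} (h : w i = false) : (fmap hs hp i).val < i.val := by
  have hv : (Fin.rev i).val = 2 * m - (i.val + 1) := Fin.val_rev _
  have h1 := (pO_spec hs hp (Fin.rev i).isLt (opener_mk (rev_opener hs h))).1
  have h2 := (pO_spec hs hp (Fin.rev i).isLt (opener_mk (rev_opener hs h))).2.1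
  rw [fmap_closer hs hp h, hv]
  rw [hv] at h1 h2
  have h3 : i.val < 2 * m := i.isLt
  omega

lemma fmap_opener_closer {i : Fin (2 * m)} (h : w i = true) : w (fmap hs hp i) = false := by
  have h1 : fmap hs hp i = ⟨pO w i.val, (pO_spec hs hp i.isLt (opener_mk h)).2.1⟩ := by
    apply Fin.ext
    rw [fmap_opener hs hp h]
  rw [h1]
  exact pO_closer hs hp i.isLt (opener_mk h)

lemma fmap_invol_opener {i : Fin (2 * m)} (h : w i = true) :
    fmap hs hp (fmap hs hp i) = i := by
  set j := fmap hs hp i with hjdef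
  have hjval : j.val = pO w i.val := fmap_opener hs hp h
  have hjcl : w j = false := fmap_opener_closer hs hp h
  apply Fin.ext
  have hL : (fmap hs hp j).val = 2 * m - 1 - pO w (Fin.rev j).val := fmap_closer hs hp hjcl
  have hrv : (Fin.rev j).val = 2 * m - 1 - pO w i.val := by
    rw [Fin.val_rev, hjval]
    omega
  rw [hrv, pO_rev hs hp i.isLt (opener_mk h)] at hL
  rw [hL]
  have := (pO_spec hs hp i.isLt (opener_mk h)).1
  have h3 : i.val < 2 * m := i.isLt
  omega

lemma fmap_rev (i : Fin (2 * m)) : fmap hs hp (Fin.rev i) = Fin.rev (fmap hs hp i) := by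
  by_cases h : w i = true
  · have hr : w (Fin.rev i) = false := by rw [hs i, h]; rfl
    apply Fin.ext
    have hL : (fmap hs hp (Fin.rev i)).val = 2 * m - 1 - pO w (Fin.rev (Fin.rev i)).val :=
      fmap_closer hs hp hr
    rw [Fin.rev_rev] at hL
    have hR : (Fin.rev (fmap hs hp i)).val = 2 * m - ((fmap hs hp i).val + 1) :=
      Fin.val_rev _
    rw [fmap_opener hs hp h] at hR
    rw [hL, hR]
    have h2 := (pO_spec hs hp i.isLt (opener_mk h)).2.1
    omega
  · have hb : w i = false := by simpa using h
    have hr : w (Fin.rev i) = true := rev_opener hs hb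
    apply Fin.ext
    have hL : (fmap hs hp (Fin.rev i)).val = pO w (Fin.rev i).val := fmap_opener hs hp hr
    have hR : (Fin.rev (fmap hs hp i)).val = 2 * m - ((fmap hs hp i).val + 1) :=
      Fin.val_rev _
    rw [fmap_closer hs hp hb] at hR
    rw [hL, hR]
    have h1 := (pO_spec hs hp (Fin.rev i).isLt (opener_mk hr)).1
    have h2 := (pO_spec hs hp (Fin.rev i).isLt (opener_mk hr)).2.1
    rw [Fin.val_rev] at h1
    have h3 : i.val < 2 * m := i.isLt
    omega

lemma fmap_invol : Function.Involutive (fmap hs hp) := by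
  intro i
  by_cases h : w i = true
  · exact fmap_invol_opener hs hp h
  · have hb : w i = false := by simpa using h
    have hr : w (Fin.rev i) = true := rev_opener hs hb
    have e1 : fmap hs hp i = Fin.rev (fmap hs hp (Fin.rev i)) := by
      have h3 := fmap_rev hs hp (Fin.rev i)
      rw [Fin.rev_rev] at h3
      exact h3
    rw [e1, fmap_rev hs hp, fmap_invol_opener hs hp hr, Fin.rev_rev]

lemma fmap_ne (i : Fin (2 * m)) : fmap hs hp i ≠ i := by
  by_cases h : w i = true
  · have := fmap_opener_lt hs hp h
    intro hc; rw [hc] at this; omega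
  · have := fmap_closer_lt hs hp (by simpa using h)
    intro hc; rw [hc] at this; omega

lemma fmap_noncross (i j : Fin (2 * m)) :
    ¬(i < j ∧ j < fmap hs hp i ∧ fmap hs hp i < fmap hs hp j) := by
  rintro ⟨h1, h2, h3⟩
  rw [Fin.lt_def] at h1 h2 h3
  have hwi : w i = true := by
    by_contra h
    have := fmap_closer_lt hs hp (by simpa using h)
    omega
  have hwj : w j = true := by
    by_contra h
    have := fmap_closer_lt hs hp (by simpa using h)
    have := fmap_opener_lt hs hp hwi
    omega
  rw [fmap_opener hs hp hwi] at h2 h3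
  rw [fmap_opener hs hp hwj] at h3
  have hspecI := pO_spec hs hp i.isLt (opener_mk hwi)
  have hc1 : wht w j.val ≤ wht w (j.val + 1) := by
    rw [wht_succ, wstep_true w j.isLt (opener_mk hwj)]
    omega
  have hc2 : wht w (pO w i.val + 1) ≤ wht w j.val := by
    rw [hspecI.2.2]
    have := pO_above hs hp i.isLt (opener_mk hwi) h1 (le_of_lt h2)
    omega
  obtain ⟨x, hx1, hx2, hx3⟩ := exists_hit (wht w) (wht w j.val)
    (by omega : j.val + 1 ≤ pO w i.val + 1)
    (fun x hxa hxb => by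
      rcases wstep_cases w (show x < 2 * m by omega) with hh | hh <;>
        rw [wht_succ, hh] <;> [left; right] <;> ring) hc1 hc2
  have hxne : x ≠ j.val + 1 := by
    intro hcon
    rw [hcon, wht_succ, wstep_true w j.isLt (opener_mk hwj)] at hx3
    omega
  have hle : pO w j.val ≤ x - 1 :=
    pO_le hs hp j.isLt (opener_mk hwj)
      ⟨by omega, by omega, by rw [show x - 1 + 1 = x by omega]; exact hx3⟩
  omega

lemma fmap_phi (i : Fin (2 * m)) : decide (i < fmap hs hp i) = w i := by
  by_cases h : w i = true
  · have h2 := fmap_opener_lt hs hp h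
    rw [h, decide_eq_true_eq, Fin.lt_def]
    exact h2
  · have hb : w i = false := by simpa using h
    have h2 := fmap_closer_lt hs hp hb
    rw [hb, decide_eq_false_iff_not, Fin.lt_def]
    omega

end Matching

/-! ### The word of a matching -/

/-- The opener/closer word of a permutation. -/
def phi {n : ℕ} (σ : Equiv.Perm (Fin n)) : Fin n → Bool := fun i => decide (i < σ i)

section Sigma

variable {m : ℕ} {σ : Equiv.Perm (Fin (2 * m))}

lemma interval_closed (h2 : ∀ i, σ (σ i) = i)
    (hnc : ∀ i j : Fin (2 * m), ¬(i < j ∧ j < σ i ∧ σ i < σ j))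
    {i x : Fin (2 * m)} (hi : i < σ i) (hx1 : i < x) (hx2 : x < σ i) :
    i < σ x ∧ σ x < σ i := by
  have hne1 : σ x ≠ σ i := fun h => hx1.ne' (σ.injective h)
  have hne2 : σ x ≠ i := by
    intro h
    have h3 : σ (σ x) = σ i := by rw [h]
    rw [h2 x] at h3
    exact hx2.ne h3
  constructor
  · by_contra hcon
    push_neg at hcon
    rcases lt_or_eq_of_le hcon with h | h
    · exact hnc (σ x) i ⟨h, by rw [h2 x]; exact hx1, by rw [h2 x]; exact hx2⟩
    · exact hne2 h
  · by_contra hcon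
    push_neg at hcon
    rcases lt_or_eq_of_le hcon with h | h
    · exact hnc i x ⟨hx1, hx2, h⟩
    · exact hne1 h.symm

lemma phi_opener {i : Fin (2 * m)} (hi : i < σ i) {h : i.val < 2 * m} :
    phi σ ⟨i.val, h⟩ = true := by
  simp only [Fin.eta, phi, decide_eq_true_eq]
  exact hi

lemma phi_closer {i : Fin (2 * m)} (hi : σ i < i) {h : i.val < 2 * m} :
    phi σ ⟨i.val, h⟩ = false := by
  simp only [Fin.eta, phi, decide_eq_false_iff_not]
  exact fun hcon => absurd (hi.trans hcon) (lt_irrefl (σ i))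

lemma sigma_B1 (h2 : ∀ i, σ (σ i) = i) (hf : ∀ i, σ i ≠ i)
    (hnc : ∀ i j : Fin (2 * m), ¬(i < j ∧ j < σ i ∧ σ i < σ j))
    {i : Fin (2 * m)} (hi : i < σ i) :
    wht (phi σ) ((σ i).val + 1) = wht (phi σ) i.val := by
  set w := phi σ with hw
  have hii : i.val < (σ i).val := hi
  have hd := wht_diff w (show i.val ≤ (σ i).val + 1 by omega)
  rw [Finset.sum_Ico_succ_top (by omega : i.val ≤ (σ i).val),
      Finset.sum_eq_sum_Ico_succ_bot (by omega : i.val < (σ i).val)] at hd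
  have hbnd : ∀ x, x ∈ Finset.Ico (i.val + 1) (σ i).val → x < 2 * m := by
    intro x hx
    simp only [Finset.mem_Ico] at hx
    have := (σ i).isLt
    omega
  have hint : ∀ x (hx : x ∈ Finset.Ico (i.val + 1) (σ i).val),
      i < σ ⟨x, hbnd x hx⟩ ∧ σ ⟨x, hbnd x hx⟩ < σ i := by
    intro x hx
    have hx' := hx
    simp only [Finset.mem_Ico] at hx'
    exact interval_closed h2 hnc hi
      (by show i.val < x; omega) (by show x < (σ i).val; omega)
  have hmid : ∑ x ∈ Finset.Ico (i.val + 1) (σ i).val, wstep w x = 0 := by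
    apply Finset.sum_involution (fun x hx => (σ ⟨x, hbnd x hx⟩).val)
    · intro x hx
      set X : Fin (2 * m) := ⟨x, hbnd x hx⟩ with hX
      have hSb : (σ X).val < 2 * m := (σ X).isLt
      rcases lt_or_gt_of_ne (hf X) with hc | hc
      · have e1 : wstep w x = -1 := wstep_false w (hbnd x hx) (phi_closer hc)
        have e2 : wstep w (σ X).val = 1 := by
          apply wstep_true w hSb
          apply phi_opener
          rw [h2 X]
          exact hc
        rw [e1, e2]; ring
      · have e1 : wstep w x = 1 := wstep_true w (hbnd x hx) (phi_opener hc)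
        have e2 : wstep w (σ X).val = -1 := by
          apply wstep_false w hSb
          apply phi_closer
          rw [h2 X]
          exact hc
        rw [e1, e2]; ring
    · intro x hx _
      intro hcon
      apply hf ⟨x, hbnd x hx⟩
      exact Fin.ext hcon
    · intro x hx
      simp only [Fin.eta, h2]
    · intro x hx
      have h3 := hint x hx
      rw [Finset.mem_Ico]
      have h4 : i.val < (σ ⟨x, hbnd x hx⟩).val := h3.1
      have h5 : (σ ⟨x, hbnd x hx⟩).val < (σ i).val := h3.2
      omega
  rw [hmid] at hd
  have e1 : wstep w i.val = 1 := wstep_true w i.isLt (phi_opener hi)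
  have e2 : wstep w (σ i).val = -1 := by
    apply wstep_false w (σ i).isLt
    apply phi_closer
    rw [h2 i]
    exact hi
  rw [e1, e2] at hd
  omega

lemma sigma_B2 (h2 : ∀ i, σ (σ i) = i) (hf : ∀ i, σ i ≠ i)
    (hnc : ∀ i j : Fin (2 * m), ¬(i < j ∧ j < σ i ∧ σ i < σ j))
    {i : Fin (2 * m)} (hi : i < σ i) {y : ℕ}
    (hy1 : i.val < y) (hy2 : y ≤ (σ i).val) :
    wht (phi σ) i.val < wht (phi σ) y := by
  classical
  set w := phi σ with hw
  have hii : i.val < (σ i).val := hi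
  have hd := wht_diff w (show i.val ≤ y by omega)
  rw [Finset.sum_eq_sum_Ico_succ_bot (by omega : i.val < y)] at hd
  have e1 : wstep w i.val = 1 := wstep_true w i.isLt (phi_opener hi)
  rw [e1] at hd
  set S := Finset.Ico (i.val + 1) y with hS
  have hbnd : ∀ x ∈ S, x < 2 * m := by
    intro x hx
    simp only [hS, Finset.mem_Ico] at hx
    have := (σ i).isLt
    omega
  have hsplit := Finset.sum_filter_add_sum_filter_not S (fun x => wstep w x = 1) (wstep w)
  have hcard1 : ∑ x ∈ S.filter (fun x => wstep w x = 1), wstep w x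
      = ((S.filter (fun x => wstep w x = 1)).card : ℤ) := by
    rw [Finset.sum_congr rfl (fun x hx => (Finset.mem_filter.1 hx).2), Finset.sum_const,
      nsmul_eq_mul, mul_one]
  have hcard2 : ∑ x ∈ S.filter (fun x => ¬ wstep w x = 1), wstep w x
      = -(((S.filter (fun x => ¬ wstep w x = 1)).card : ℤ)) := by
    have hall : ∀ x ∈ S.filter (fun x => ¬ wstep w x = 1), wstep w x = -1 := by
      intro x hx
      rcases Finset.mem_filter.1 hx with ⟨hxS, hxn⟩
      rcases wstep_cases w (hbnd x hxS) with h | h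
      · exact absurd h hxn
      · exact h
    rw [Finset.sum_congr rfl hall, Finset.sum_const, nsmul_eq_mul, mul_neg_one]
  have hcardle : (S.filter (fun x => ¬ wstep w x = 1)).card
      ≤ (S.filter (fun x => wstep w x = 1)).card := by
    apply Finset.card_le_card_of_injOn
      (fun x => if h : x < 2 * m then (σ ⟨x, h⟩).val else 0)
    · intro x hx
      rcases Finset.mem_filter.1 hx with ⟨hxS, hxn⟩
      have hxb := hbnd x hxS
      show (if h : x < 2 * m then (σ ⟨x, h⟩).val else 0) ∈ S.filter (fun x => wstep w x = 1)
      rw [dif_pos hxb]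
      set X : Fin (2 * m) := ⟨x, hxb⟩ with hX
      have hxcl : σ X < X := by
        rcases lt_or_gt_of_ne (hf X) with hc | hc
        · exact hc
        · exact absurd (wstep_true w hxb (phi_opener hc)) hxn
      have hxS' := hxS
      simp only [hS, Finset.mem_Ico] at hxS'
      have hint := interval_closed h2 hnc hi (i := i) (x := X)
        (by show i.val < x; omega) (by show x < (σ i).val; omega)
      rw [Finset.mem_filter]
      constructor
      · simp only [hS, Finset.mem_Ico]
        have h4 : i.val < (σ X).val := hint.1
        have h5 : (σ X).val < x := hxcl
        omega
      · apply wstep_true w (σ X).isLt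
        apply phi_opener
        rw [h2 X]
        exact hxcl
    · intro a ha b hb hab
      have hab' : (σ ⟨a, hbnd a (Finset.mem_of_mem_filter a ha)⟩).val
          = (σ ⟨b, hbnd b (Finset.mem_of_mem_filter b hb)⟩).val := by
        simp only [dif_pos (hbnd a (Finset.mem_of_mem_filter a ha)),
            dif_pos (hbnd b (Finset.mem_of_mem_filter b hb))] at hab
        exact hab
      have h7 := σ.injective (Fin.ext hab')
      exact congrArg Fin.val h7
  have hfinal : 0 ≤ ∑ x ∈ S, wstep w x := by
    rw [← hsplit, hcard1, hcard2]
    have := hcardle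
    omega
  omega

lemma sigma_A (h2 : ∀ i, σ (σ i) = i) (hf : ∀ i, σ i ≠ i)
    (hnc : ∀ i j : Fin (2 * m), ¬(i < j ∧ j < σ i ∧ σ i < σ j)) :
    ∀ x, 0 ≤ wht (phi σ) x := by
  intro x
  induction x using Nat.strong_induction_on with
  | _ x ih =>
    match x with
    | 0 => simp
    | t + 1 =>
      by_cases ht : t < 2 * m
      · by_cases hop : phi σ ⟨t, ht⟩ = true
        · rw [wht_succ, wstep_true _ ht hop]
          have := ih t (by omega)
          omega
        · have hcl : phi σ ⟨t, ht⟩ = false := by simpa using hop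
          set X : Fin (2 * m) := ⟨t, ht⟩ with hX
          have hXlt : σ X < X := by
            rcases lt_or_gt_of_ne (hf X) with hc | hc
            · exact hc
            · exact absurd (phi_opener hc) (by rw [hcl]; simp)
          set I : Fin (2 * m) := σ X with hI
          have hsi : σ I = X := h2 X
          have hIop : I < σ I := by rw [hsi]; exact hXlt
          have hB1 := sigma_B1 h2 hf hnc hIop
          rw [hsi] at hB1
          have hIlt : I.val < t := hXlt
          rw [show (X.val : ℕ) = t from rfl] at hB1
          rw [hB1]
          exact ih I.val (by omega)
      · rw [wht_succ]
        have h3 := ih t (by omega)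
        have h4 : wstep (phi σ) t = 0 := by unfold wstep; rw [dif_neg ht]
        omega

lemma phi_sym (hf : ∀ i, σ i ≠ i) (hsym : ∀ i, σ (Fin.rev i) = Fin.rev (σ i)) :
    ∀ i, phi σ (Fin.rev i) = !(phi σ i) := by
  intro i
  have h1 : phi σ (Fin.rev i) = decide (σ i < i) := by
    unfold phi
    rw [decide_eq_decide, hsym i]
    exact Fin.rev_lt_rev
  rcases lt_or_gt_of_ne (hf i) with hc | hc
  · rw [h1]
    unfold phi
    simp [hc, hc.asymm]
  · rw [h1]
    unfold phi
    simp [hc, hc.asymm]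

lemma phi_pO (h2 : ∀ i, σ (σ i) = i) (hf : ∀ i, σ i ≠ i)
    (hnc : ∀ i j : Fin (2 * m), ¬(i < j ∧ j < σ i ∧ σ i < σ j))
    (hsym : ∀ i, σ (Fin.rev i) = Fin.rev (σ i))
    {i : Fin (2 * m)} (hi : i < σ i) : pO (phi σ) i.val = (σ i).val := by
  have hs := phi_sym hf hsym
  have hp := sigma_A h2 hf hnc
  have hop : phi σ ⟨i.val, i.isLt⟩ = true := phi_opener hi
  have hex := pO_exists hs hp i.isLt hop
  rw [pO, dif_pos hex, Nat.find_eq_iff hex]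
  constructor
  · exact ⟨hi, (σ i).isLt, sigma_B1 h2 hf hnc hi⟩
  · rintro j hj ⟨ha, hb, hc⟩
    have hlt := sigma_B2 h2 hf hnc hi (y := j + 1) (by omega) (by omega)
    rw [hc] at hlt
    omega

lemma recon (h2 : ∀ i, σ (σ i) = i) (hf : ∀ i, σ i ≠ i)
    (hnc : ∀ i j : Fin (2 * m), ¬(i < j ∧ j < σ i ∧ σ i < σ j))
    (hsym : ∀ i, σ (Fin.rev i) = Fin.rev (σ i)) (i : Fin (2 * m)) :
    fmap (phi_sym hf hsym) (sigma_A h2 hf hnc) i = σ i := by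
  rcases lt_or_gt_of_ne (hf i) with hc | hc
  · -- σ i < i : closer
    have hwi : phi σ i = false := by simp [phi, hc.asymm]
    apply Fin.ext
    rw [fmap_closer _ _ hwi]
    have hrlt : Fin.rev i < σ (Fin.rev i) := by
      rw [hsym i]
      exact Fin.rev_lt_rev.2 hc
    have hpo := phi_pO h2 hf hnc hsym hrlt
    rw [hpo, hsym i]
    have hv1 : (Fin.rev (σ i)).val = 2 * m - ((σ i).val + 1) := Fin.val_rev _
    rw [hv1]
    have := (σ i).isLt
    omega
  · -- i < σ i : opener
    have hwi : phi σ i = true := by simp [phi, hc]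
    apply Fin.ext
    rw [fmap_opener _ _ hwi]
    exact phi_pO h2 hf hnc hsym hc

end Sigma


/-! ### Restriction to the first half and symmetric extension -/

section Half

variable {m : ℕ}

/-- Restriction of a full word to its first half. -/
def restr (w : Fin (2 * m) → Bool) : Fin m → Bool := fun i => w ⟨i.val, by omega⟩

/-- Symmetric extension of a half word. -/
def extw (v : Fin m → Bool) : Fin (2 * m) → Bool := fun i =>
  if h : i.val < m then v ⟨i.val, h⟩ else !v ⟨2 * m - 1 - i.val, by
    have := i.isLt; omega⟩

lemma restr_wht (w : Fin (2 * m) → Bool) {x : ℕ} (hx : x ≤ m) :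
    wht (restr w) x = wht w x := by
  apply Finset.sum_congr rfl
  intro i hi
  rw [Finset.mem_range] at hi
  have h1 : i < m := by omega
  have h2 : i < 2 * m := by omega
  unfold wstep
  rw [dif_pos h1, dif_pos h2]
  rfl

lemma extw_sym (v : Fin m → Bool) : ∀ i, extw v (Fin.rev i) = !(extw v i) := by
  intro i
  have hrv : (Fin.rev i).val = 2 * m - (i.val + 1) := Fin.val_rev _
  have hilt : i.val < 2 * m := i.isLt
  by_cases h : i.val < m
  · have h2 : ¬ ((Fin.rev i).val < m) := by omega
    unfold extw
    rw [dif_neg h2, dif_pos h]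
    congr 2
    apply Fin.ext
    simp only []
    omega
  · have h2 : (Fin.rev i).val < m := by omega
    unfold extw
    rw [dif_pos h2, dif_neg h, Bool.not_not]
    congr 1
    apply Fin.ext
    simp only []
    omega

lemma extw_wht (v : Fin m → Bool) {x : ℕ} (hx : x ≤ m) :
    wht (extw v) x = wht v x := by
  apply Finset.sum_congr rfl
  intro i hi
  rw [Finset.mem_range] at hi
  have h1 : i < m := by omega
  have h2 : i < 2 * m := by omega
  unfold wstep
  rw [dif_pos h1, dif_pos h2]
  unfold extw
  rw [dif_pos h1]

lemma extw_pos (v : Fin m → Bool) (hv : ∀ x, 0 ≤ wht v x) : ∀ x, 0 ≤ wht (extw v) x := by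
  intro x
  rcases le_or_gt x m with h | h
  · rw [extw_wht v h]; exact hv x
  · rcases le_or_gt x (2 * m) with h2 | h2
    · have h3 : wht (extw v) x = wht (extw v) (2 * m - (2 * m - x)) := by
        congr 1; omega
      rw [h3, wht_rev (extw_sym v) (by omega : 2 * m - x ≤ 2 * m),
        extw_wht v (by omega : 2 * m - x ≤ m)]
      exact hv _
    · rw [wht_stable (extw v) (by omega : 2 * m ≤ x), wht_total (extw_sym v)]

/-- The equivalence between symmetric nonnegative full words and nonnegative half words. -/
def WtoL : {w : Fin (2 * m) → Bool // (∀ i, w (Fin.rev i) = !(w i)) ∧ (∀ x, 0 ≤ wht w x)}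
    ≃ Lst 0 m where
  toFun := fun u => ⟨restr u.1, fun x => by
    rcases le_or_gt x m with h | h
    · rw [restr_wht u.1 h]
      have := u.2.2 x
      omega
    · rw [wht_stable (restr u.1) (by omega : m ≤ x), restr_wht u.1 (le_refl m)]
      have := u.2.2 m
      omega⟩
  invFun := fun v => ⟨extw v.1, extw_sym v.1, extw_pos v.1 (fun x => by
    have := v.2 x
    omega)⟩
  left_inv := fun u => by
    apply Subtype.ext
    funext i
    have hilt : i.val < 2 * m := i.isLt
    by_cases h : i.val < m
    · show extw (restr u.1) i = u.1 i
      unfold extw restr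
      rw [dif_pos h]
    · show extw (restr u.1) i = u.1 i
      unfold extw restr
      rw [dif_neg h]
      have hrv : (⟨2 * m - 1 - i.val, by omega⟩ : Fin (2 * m)) = Fin.rev i := by
        apply Fin.ext
        rw [Fin.val_rev]
        simp only []
        omega
      show (!(u.1 ⟨2 * m - 1 - i.val, by omega⟩)) = u.1 i
      rw [hrv, u.2.1 i, Bool.not_not]
  right_inv := fun v => by
    apply Subtype.ext
    funext i
    show extw v.1 ⟨i.val, by omega⟩ = v.1 i
    unfold extw
    rw [dif_pos (by exact i.isLt : ((⟨i.val, by omega⟩ : Fin (2 * m))).val < m)]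

end Half

/-! ### The main equivalence -/

/-- The equivalence between symmetric noncrossing matchings and symmetric nonnegative words. -/
noncomputable def MtoW (m : ℕ) :
    {σ : Equiv.Perm (Fin (2 * m)) //
      (∀ i, σ (σ i) = i) ∧ (∀ i, σ i ≠ i) ∧
      (∀ i j : Fin (2 * m), ¬(i < j ∧ j < σ i ∧ σ i < σ j)) ∧
      ∀ i, σ (Fin.rev i) = Fin.rev (σ i)}
    ≃ {w : Fin (2 * m) → Bool // (∀ i, w (Fin.rev i) = !(w i)) ∧ (∀ x, 0 ≤ wht w x)} where
  toFun := fun s => ⟨phi s.1, phi_sym s.2.2.1 s.2.2.2.2, sigma_A s.2.1 s.2.2.1 s.2.2.2.1⟩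
  invFun := fun u =>
    ⟨Function.Involutive.toPerm (fmap u.2.1 u.2.2) (fmap_invol u.2.1 u.2.2), by
      refine ⟨?_, ?_, ?_, ?_⟩
      · intro i
        simp only [Function.Involutive.coe_toPerm]
        exact fmap_invol u.2.1 u.2.2 i
      · intro i
        simp only [Function.Involutive.coe_toPerm]
        exact fmap_ne u.2.1 u.2.2 i
      · intro i j
        simp only [Function.Involutive.coe_toPerm]
        exact fmap_noncross u.2.1 u.2.2 i j
      · intro i
        simp only [Function.Involutive.coe_toPerm]
        exact fmap_rev u.2.1 u.2.2 i⟩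
  left_inv := fun s => by
    apply Subtype.ext
    apply Equiv.ext
    intro i
    simp only [Function.Involutive.coe_toPerm]
    exact recon s.2.1 s.2.2.1 s.2.2.2.1 s.2.2.2.2 i
  right_inv := fun u => by
    apply Subtype.ext
    funext i
    simp only [phi, Function.Involutive.coe_toPerm]
    exact fmap_phi u.2.1 u.2.2 i

end SymMatch


/-- The number of symmetric chord diagrams with `m` degree-one vertices on the
positive ray and their `m` mirror images (no vertices at `0` or `∞`) equals
`C(m, ⌊m/2⌋)`.  The `2m` points are encoded as `Fin (2m)` (the first `m`
being the negative points), the reflection `z ↦ -z̄` as `Fin.rev`, and the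
diagram as a fixed-point-free noncrossing involution commuting with the
reflection. -/
theorem symmetric_noncrossing_matchings_card (m : ℕ) (hm : 0 < m) :
    Nat.card {σ : Equiv.Perm (Fin (2 * m)) //
      (∀ i, σ (σ i) = i) ∧ (∀ i, σ i ≠ i) ∧
      (∀ i j : Fin (2 * m), ¬(i < j ∧ j < σ i ∧ σ i < σ j)) ∧
      ∀ i, σ (Fin.rev i) = Fin.rev (σ i)} =
    m.choose (m / 2) := by
  calc Nat.card {σ : Equiv.Perm (Fin (2 * m)) //
      (∀ i, σ (σ i) = i) ∧ (∀ i, σ i ≠ i) ∧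
      (∀ i j : Fin (2 * m), ¬(i < j ∧ j < σ i ∧ σ i < σ j)) ∧
      ∀ i, σ (Fin.rev i) = Fin.rev (σ i)}
      = Nat.card {w : Fin (2 * m) → Bool //
          (∀ i, w (Fin.rev i) = !(w i)) ∧ (∀ x, 0 ≤ SymMatch.wht w x)} :=
        Nat.card_congr (SymMatch.MtoW m)
    _ = Nat.card (SymMatch.Lst 0 m) := Nat.card_congr SymMatch.WtoL
    _ = SymMatch.F m 0 := SymMatch.card_lst m 0
    _ = m.choose (m / 2) := SymMatch.F_zero_right m
end

section
/- If m₀ > 2(m₁ + … + m_{n-2}), then every symmetric chord diagram with degrees m₀ at 0, m_j at the positive vertices a_j (1 ≤ j ≤ n-2) and their mirror images, and m_{n-1} at ∞, has no crossing edges; consequently E(m₀, m₁, …, m_{n-2}, m_{n-1}) = K(m₀/2, m₁, …, m_{n-2}, m_{n-1}/2). -/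
/-- Vertex of the end in position `x`, for a diagram whose consecutive
vertices have the degrees listed in `L`. -/
def vertexOf : List ℕ → ℕ → ℕ
  | [], _ => 0
  | m :: L, x => if x < m then 0 else vertexOf L (x - m) + 1

/-- A chord diagram on a set of linearly ordered arc-ends with vertex degree
list `L`: a fixed-point-free noncrossing involution joining ends at distinct
vertices. -/
def IsChordDiagram (L : List ℕ) (σ : Equiv.Perm (Fin L.sum)) : Prop :=
  (∀ i, σ (σ i) = i) ∧ (∀ i, σ i ≠ i) ∧
  (∀ i j, ¬(i < j ∧ j < σ i ∧ σ i < σ j)) ∧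
  ∀ i : Fin L.sum, vertexOf L (i : ℕ) ≠ vertexOf L ((σ i : ℕ))

/-- The number of chord diagrams with vertex degree list `L`
(for two-row contents this is the Kostka number `K(L)`). -/
noncomputable def chordCount (L : List ℕ) : ℕ :=
  Nat.card {σ : Equiv.Perm (Fin L.sum) // IsChordDiagram L σ}

/-- The reflection `z ↦ -z̄` on the circle of `N` arc-ends, the first `m₀` of
which sit at the vertex `0`:  `x ↦ (m₀ - 1 - x) mod N`. -/
def reflEnd (m₀ : ℕ) {N : ℕ} (x : Fin N) : Fin N :=
  ⟨(m₀ + N - 1 - (x : ℕ)) % N, Nat.mod_lt _ x.pos⟩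

/-- The degree list of a symmetric diagram: `m₀` ends at `0`, the positive
vertices `L`, `minf` ends at `∞`, then the mirror (negative) vertices. -/
def symList (m₀ : ℕ) (L : List ℕ) (minf : ℕ) : List ℕ :=
  m₀ :: (L ++ minf :: L.reverse)

/-- The number `E(m₀, L, minf)` of chord diagrams symmetric under the
reflection `z ↦ -z̄`, with degrees `m₀` at `0`, `minf` at `∞`, and `L` at the
positive vertices. -/
noncomputable def symCount (m₀ : ℕ) (L : List ℕ) (minf : ℕ) : ℕ :=
  Nat.card {σ : Equiv.Perm (Fin (symList m₀ L minf).sum) //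
    IsChordDiagram (symList m₀ L minf) σ ∧
    ∀ i, σ (reflEnd m₀ i) = reflEnd m₀ (σ i)}



lemma vertexOf_lt (T : List ℕ) (m x : ℕ) (h : x < m) : vertexOf (m :: T) x = 0 := by
  simp [vertexOf, h]

lemma vertexOf_ge (T : List ℕ) (m x : ℕ) (h : m ≤ x) :
    vertexOf (m :: T) x = vertexOf T (x - m) + 1 := by
  simp [vertexOf, Nat.not_lt.2 h]

lemma vertexOf_append_left : ∀ (T T' : List ℕ) (x : ℕ), x < T.sum →
    vertexOf (T ++ T') x = vertexOf T x
  | [], _, _, h => by simp at h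
  | m :: T, T', x, h => by
    by_cases hx : x < m
    · simp [vertexOf, hx]
    · simp only [List.cons_append, vertexOf, hx, if_false, List.append_eq]
      rw [vertexOf_append_left T T' (x - m) (by simp [List.sum_cons] at h; omega)]

lemma vertexOf_append_right : ∀ (T T' : List ℕ) (x : ℕ), T.sum ≤ x →
    vertexOf (T ++ T') x = T.length + vertexOf T' (x - T.sum)
  | [], _, _, _ => by simp
  | m :: T, T', x, h => by
    simp only [List.sum_cons] at h
    have hx : ¬ x < m := by omega
    simp only [List.cons_append, vertexOf, hx, if_false, List.append_eq]
    rw [vertexOf_append_right T T' (x - m) (by omega)]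
    have : x - m - T.sum = x - (m :: T).sum := by simp [List.sum_cons]; omega
    rw [this]
    simp [List.length_cons]
    omega

lemma vertexOf_lt_length : ∀ (T : List ℕ) (x : ℕ), x < T.sum → vertexOf T x < T.length
  | [], _, h => by simp at h
  | m :: T, x, h => by
    by_cases hx : x < m
    · simp [vertexOf, hx]
    · simp only [vertexOf, hx, if_false, List.length_cons]
      have := vertexOf_lt_length T (x - m) (by simp [List.sum_cons] at h; omega)
      omega

lemma vertexOf_reverse : ∀ (T : List ℕ) (x : ℕ), x < T.sum →
    vertexOf T.reverse (T.sum - 1 - x) + 1 + vertexOf T x = T.length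
  | [], _, h => by simp at h
  | m :: T, x, h => by
    simp only [List.sum_cons] at h ⊢
    rw [List.reverse_cons]
    by_cases hx : x < m
    · rw [vertexOf_lt _ _ _ hx]
      rw [vertexOf_append_right T.reverse [m] _ (by rw [List.sum_reverse]; omega)]
      rw [vertexOf_lt _ _ _ (by rw [List.sum_reverse]; omega)]
      simp
    · rw [vertexOf_ge _ _ _ (by omega)]
      rw [vertexOf_append_left T.reverse [m] _ (by rw [List.sum_reverse]; omega)]
      have := vertexOf_reverse T (x - m) (by omega)
      have : T.sum - 1 - (x - m) = m + T.sum - 1 - x := by omega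
      rw [← this]
      have := vertexOf_reverse T (x - m) (by omega)
      simp only [List.length_cons]
      omega



lemma symList_sum (m₀ minf : ℕ) (L : List ℕ) :
    (symList m₀ L minf).sum = m₀ + (L.sum + (minf + L.sum)) := by
  simp [symList, List.sum_append, List.sum_reverse]

-- block computations
lemma vtx0 (m₀ minf : ℕ) (L : List ℕ) (x : ℕ) (h : x < m₀) :
    vertexOf (symList m₀ L minf) x = 0 := vertexOf_lt _ _ _ h

lemma vtx0' (m₀ minf : ℕ) (L : List ℕ) (x : ℕ) (h : m₀ ≤ x) :
    vertexOf (symList m₀ L minf) x ≠ 0 := by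
  rw [symList, vertexOf_ge _ _ _ h]; omega

lemma vtxB (m₀ minf : ℕ) (L : List ℕ) (x : ℕ) (h1 : m₀ ≤ x) (h2 : x < m₀ + L.sum) :
    vertexOf (symList m₀ L minf) x = vertexOf L (x - m₀) + 1 := by
  rw [symList, vertexOf_ge _ _ _ h1, vertexOf_append_left L _ _ (by omega)]

lemma vtxI (m₀ minf : ℕ) (L : List ℕ) (x : ℕ) (h1 : m₀ + L.sum ≤ x)
    (h2 : x < m₀ + L.sum + minf) :
    vertexOf (symList m₀ L minf) x = L.length + 1 := by
  rw [symList, vertexOf_ge _ _ _ (by omega),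
    vertexOf_append_right L _ _ (by omega), vertexOf_lt _ _ _ (by omega)]

lemma vtxD (m₀ minf : ℕ) (L : List ℕ) (x : ℕ) (h1 : m₀ + L.sum + minf ≤ x) :
    vertexOf (symList m₀ L minf) x
      = L.length + 2 + vertexOf L.reverse (x - (m₀ + L.sum + minf)) := by
  rw [symList, vertexOf_ge _ _ _ (by omega),
    vertexOf_append_right L _ _ (by omega), vertexOf_ge _ _ _ (by omega)]
  have : x - m₀ - L.sum - minf = x - (m₀ + L.sum + minf) := by omega
  rw [this]; omega

-- reflEnd value
lemma reflEnd_val_lo {m₀ N : ℕ} (x : Fin N) (h : (x : ℕ) < m₀) (hm : m₀ ≤ N) :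
    (reflEnd m₀ x : ℕ) = m₀ - 1 - x := by
  have : m₀ + N - 1 - (x : ℕ) = N + (m₀ - 1 - x) := by omega
  simp only [reflEnd, this, Nat.add_mod_left]
  exact Nat.mod_eq_of_lt (by omega)

lemma reflEnd_val_hi {m₀ N : ℕ} (x : Fin N) (h : m₀ ≤ (x : ℕ)) :
    (reflEnd m₀ x : ℕ) = m₀ + N - 1 - x := by
  have hx := x.isLt
  simp only [reflEnd]
  exact Nat.mod_eq_of_lt (by omega)

lemma reflEnd_reflEnd {m₀ N : ℕ} (x : Fin N) (hm : m₀ ≤ N) :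
    reflEnd m₀ (reflEnd m₀ x) = x := by
  have hx := x.isLt
  apply Fin.ext
  by_cases h : (x : ℕ) < m₀
  · have h1 := reflEnd_val_lo x h hm
    have h2 : (reflEnd m₀ x : ℕ) < m₀ := by omega
    rw [reflEnd_val_lo _ h2 hm, h1]
    omega
  · have h1 := reflEnd_val_hi x (m₀ := m₀) (by omega)
    have h2 : m₀ ≤ (reflEnd m₀ x : ℕ) := by rw [h1]; omega
    rw [reflEnd_val_hi _ h2, h1]
    omega

lemma ncClosure (m₀ minf M mi N : ℕ) (L : List ℕ)
    (hNdef : N = (symList m₀ L minf).sum)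
    (hM : m₀ = M + M) (hmi : minf = mi + mi) (hbig : 2 * L.sum < m₀)
    (σ : Equiv.Perm (Fin N))
    (hinv : ∀ i, σ (σ i) = i)
    (hC : ∀ i j, ¬(i < j ∧ j < σ i ∧ σ i < σ j))
    (hV : ∀ i : Fin N,
      vertexOf (symList m₀ L minf) (i : ℕ) ≠ vertexOf (symList m₀ L minf) ((σ i : ℕ)))
    (hsym : ∀ i, σ (reflEnd m₀ i) = reflEnd m₀ (σ i))
    (x : Fin N) (h1 : M ≤ (x : ℕ))
    (h2 : (x : ℕ) < m₀ + L.sum + mi) :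
    M ≤ (σ x : ℕ) ∧ (σ x : ℕ) < m₀ + L.sum + mi := by
  have hNv : N = m₀ + (L.sum + (minf + L.sum)) := by
    rw [hNdef]; exact symList_sum m₀ minf L
  have hmN : m₀ ≤ N := by omega
  by_contra hcon
  rw [not_and_or, not_le, not_lt] at hcon
  set y := σ x with hy
  have hyx : σ y = x := hinv x
  have hsx : σ (reflEnd m₀ x) = reflEnd m₀ y := hsym x
  have hsy : σ (reflEnd m₀ y) = reflEnd m₀ x := by rw [hsym y, hyx]
  have hsxv : (σ (reflEnd m₀ x) : ℕ) = (reflEnd m₀ y : ℕ) := congrArg Fin.val hsx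
  have hsyv : (σ (reflEnd m₀ y) : ℕ) = (reflEnd m₀ x : ℕ) := congrArg Fin.val hsy
  have hyxv : (σ y : ℕ) = (x : ℕ) := congrArg Fin.val hyx
  have hxN := x.isLt
  have hyN := y.isLt
  rcases hcon with hylo | hyhi
  · -- y < M
    by_cases hxA : (x : ℕ) < m₀
    · exact hV x (by rw [vtx0 _ minf _ _ hxA, vtx0 _ minf _ _ (by omega : (y:ℕ) < m₀)])
    · have hry := reflEnd_val_lo y (by omega : (y:ℕ) < m₀) hmN
      have hrx := reflEnd_val_hi x (m₀ := m₀) (by omega)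
      refine hC y (reflEnd m₀ y) ⟨?_, ?_, ?_⟩ <;>
        · simp only [Fin.lt_def, hyxv, hsyv]; omega
  · -- y ≥ m₀ + S + mi
    have hym : m₀ ≤ (y : ℕ) := by omega
    have hry := reflEnd_val_hi y (m₀ := m₀) hym
    by_cases hyC : (y : ℕ) < m₀ + L.sum + minf
    · by_cases hxA : (x : ℕ) < m₀
      · have hrx := reflEnd_val_lo x hxA hmN
        refine hC (reflEnd m₀ x) x ⟨?_, ?_, ?_⟩ <;>
          · simp only [Fin.lt_def, hsxv]; omega
      · by_cases hxB : (x : ℕ) < m₀ + L.sum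
        · have hrx := reflEnd_val_hi x (m₀ := m₀) (by omega)
          refine hC x (reflEnd m₀ y) ⟨?_, ?_, ?_⟩ <;>
            · simp only [Fin.lt_def, hsyv]; omega
        · exact hV x (by rw [vtxI _ _ _ _ (by omega) (by omega),
            vtxI _ _ _ _ (by omega : m₀ + L.sum ≤ (y:ℕ)) (by omega)])
    · by_cases hxA : (x : ℕ) < m₀
      · have hrx := reflEnd_val_lo x hxA hmN
        refine hC (reflEnd m₀ x) x ⟨?_, ?_, ?_⟩ <;>
          · simp only [Fin.lt_def, hsxv]; omega
      · have hrx := reflEnd_val_hi x (m₀ := m₀) (by omega)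
        by_cases hxB : (x : ℕ) < m₀ + L.sum
        · rcases lt_trichotomy (x : ℕ) ((reflEnd m₀ y : ℕ)) with hlt | heq | hgt
          · refine hC x (reflEnd m₀ y) ⟨?_, ?_, ?_⟩ <;>
              · simp only [Fin.lt_def, hsyv]; omega
          · -- self-mirrored crossing edge: counting argument
            have hex : reflEnd m₀ y = x := Fin.ext heq.symm
            have hxy : σ x = reflEnd m₀ x := hex ▸ hsy
            have hxyv : (σ x : ℕ) = (reflEnd m₀ x : ℕ) := congrArg Fin.val hxy
            have step : ∀ i : Fin N, (i : ℕ) < m₀ →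
                m₀ ≤ (σ i : ℕ) ∧ ((σ i : ℕ) < (x:ℕ) ∨ m₀ + N - 1 - (x:ℕ) < (σ i : ℕ)) := by
              intro i hi
              have hm : m₀ ≤ (σ i : ℕ) := by
                by_contra hc
                exact hV i (by rw [vtx0 _ minf _ _ hi, vtx0 _ minf _ _ (by omega)])
              refine ⟨hm, ?_⟩
              by_contra hc
              rw [not_or, not_lt, not_lt] at hc
              have hne1 : σ i ≠ x := by
                intro h
                have h2 : i = σ x := by rw [← h, hinv]
                have h3 := congrArg Fin.val h2
                rw [hxyv] at h3
                omega
              have hne2 : (σ i : ℕ) ≠ (σ x : ℕ) := fun h => by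
                have : i = x := σ.injective (Fin.ext h)
                have := congrArg Fin.val this; omega
              have hlt1 : (x:ℕ) < (σ i : ℕ) := by
                rcases Nat.lt_or_ge (x:ℕ) (σ i : ℕ) with h | h
                · exact h
                · exact absurd (Fin.ext (by omega : ((σ i : ℕ)) = (x:ℕ))) hne1
              refine hC i x ⟨?_, ?_, ?_⟩ <;>
                · simp only [Fin.lt_def]; omega
            set g : ℕ → ℕ := fun i =>
              if h : i < N then
                (if (σ ⟨i, h⟩ : ℕ) < m₀ + L.sum then 2 * ((σ ⟨i, h⟩ : ℕ) - m₀)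
                 else 2 * ((m₀ + N - 1 - (σ ⟨i, h⟩ : ℕ)) - m₀) + 1)
              else 0 with hg
            have hcard : (Finset.range m₀).card ≤ (Finset.range (2 * ((x:ℕ) - m₀))).card := by
              apply Finset.card_le_card_of_injOn g
              · intro i hi
                rw [Finset.mem_coe, Finset.mem_range] at hi ⊢
                have hiN : i < N := by omega
                obtain ⟨ha, hb⟩ := step ⟨i, hiN⟩ hi
                have hsiN := (σ ⟨i, hiN⟩).isLt
                rw [hg]
                simp only [dif_pos hiN]
                by_cases hcase : (σ ⟨i, hiN⟩ : ℕ) < m₀ + L.sum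
                · rw [if_pos hcase]; omega
                · rw [if_neg hcase]; omega
              · intro i hi i' hi' hgg
                rw [Finset.coe_range, Set.mem_Iio] at hi hi'
                have hiN : i < N := by omega
                have hiN' : i' < N := by omega
                rw [hg] at hgg
                simp only [dif_pos hiN, dif_pos hiN'] at hgg
                have hsiN := (σ ⟨i, hiN⟩).isLt
                have hsiN' := (σ ⟨i', hiN'⟩).isLt
                obtain ⟨ha, _⟩ := step ⟨i, hiN⟩ hi
                obtain ⟨ha', _⟩ := step ⟨i', hiN'⟩ hi'
                have hval : (σ ⟨i, hiN⟩ : ℕ) = (σ ⟨i', hiN'⟩ : ℕ) := by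
                  by_cases c1 : (σ ⟨i, hiN⟩ : ℕ) < m₀ + L.sum <;>
                    by_cases c2 : (σ ⟨i', hiN'⟩ : ℕ) < m₀ + L.sum <;>
                    simp only [c1, c2, if_true, if_false] at hgg <;> omega
                have h5 : σ ⟨i, hiN⟩ = σ ⟨i', hiN'⟩ := Fin.ext hval
                have h6 := σ.injective h5
                exact congrArg Fin.val h6
            simp only [Finset.card_range] at hcard
            omega
          · refine hC (reflEnd m₀ y) x ⟨?_, ?_, ?_⟩ <;>
              · simp only [Fin.lt_def, hsyv]; omega
        · refine hC (reflEnd m₀ y) x ⟨?_, ?_, ?_⟩ <;>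
            · simp only [Fin.lt_def, hsyv]; omega

lemma Lh_sum (M mi : ℕ) (L : List ℕ) : (M :: (L ++ [mi])).sum = M + (L.sum + mi) := by
  simp [List.sum_cons, List.sum_append]

lemma vtx_half (m₀ minf M mi : ℕ) (L : List ℕ) (hM : m₀ = M + M) (hmi : minf = mi + mi)
    (a : ℕ) (ha : a < M + (L.sum + mi)) :
    vertexOf (symList m₀ L minf) (M + a) = vertexOf (M :: (L ++ [mi])) a := by
  by_cases h1 : a < M
  · rw [vtx0 _ _ _ _ (by omega), vertexOf_lt _ _ _ h1]
  · by_cases h2 : a < M + L.sum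
    · rw [vtxB _ _ _ _ (by omega) (by omega), vertexOf_ge _ _ _ (by omega),
        vertexOf_append_left L _ _ (by omega)]
      congr 2
      omega
    · rw [vtxI _ _ _ _ (by omega) (by omega), vertexOf_ge _ _ _ (by omega),
        vertexOf_append_right L _ _ (by omega), vertexOf_lt _ _ _ (by omega)]

lemma vtx_refl_spec (m₀ minf M mi N : ℕ) (L : List ℕ)
    (hNdef : N = (symList m₀ L minf).sum)
    (hM : m₀ = M + M) (hmi : minf = mi + mi) (w : Fin N)
    (hw1 : M ≤ (w : ℕ)) (hw2 : (w : ℕ) < m₀ + L.sum + mi) :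
    (vertexOf (symList m₀ L minf) (w : ℕ) = 0 ∧
      vertexOf (symList m₀ L minf) (reflEnd m₀ w : ℕ) = 0) ∨
    (1 ≤ vertexOf (symList m₀ L minf) (w : ℕ) ∧
      vertexOf (symList m₀ L minf) (w : ℕ) ≤ L.length ∧
      vertexOf (symList m₀ L minf) (reflEnd m₀ w : ℕ)
        + vertexOf (symList m₀ L minf) (w : ℕ) = 2 * L.length + 2) ∨
    (vertexOf (symList m₀ L minf) (w : ℕ) = L.length + 1 ∧
      vertexOf (symList m₀ L minf) (reflEnd m₀ w : ℕ) = L.length + 1) := by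
  have hNv : N = m₀ + (L.sum + (minf + L.sum)) := by
    rw [hNdef]; exact symList_sum m₀ minf L
  have hwN := w.isLt
  by_cases h1 : (w : ℕ) < m₀
  · left
    have hr := reflEnd_val_lo w h1 (by omega)
    exact ⟨vtx0 _ _ _ _ h1, vtx0 _ _ _ _ (by omega)⟩
  · have hr := reflEnd_val_hi w (m₀ := m₀) (by omega)
    by_cases h2 : (w : ℕ) < m₀ + L.sum
    · right; left
      have hrev := vertexOf_reverse L ((w : ℕ) - m₀) (by omega)
      have hlen := vertexOf_lt_length L ((w : ℕ) - m₀) (by omega)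
      rw [vtxB _ _ _ _ (by omega) h2, vtxD _ _ _ _ (by omega)]
      have hidx : (reflEnd m₀ w : ℕ) - (m₀ + L.sum + minf) = L.sum - 1 - ((w : ℕ) - m₀) := by
        omega
      rw [hidx]
      refine ⟨by omega, by omega, by omega⟩
    · right; right
      rw [vtxI _ _ _ _ (by omega) (by omega), vtxI _ _ _ _ (by omega) (by omega)]
      exact ⟨rfl, rfl⟩

def splitEquiv (m₀ minf M mi : ℕ) (L : List ℕ) (hM : m₀ = M + M) (hmi : minf = mi + mi) :
    (Fin ((M :: (L ++ [mi])).sum) ⊕ Fin ((M :: (L ++ [mi])).sum))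
      ≃ Fin ((symList m₀ L minf).sum) where
  toFun s :=
    match s with
    | .inl k => ⟨M + (k : ℕ), by
        have hk : (k:ℕ) < M + (L.sum + mi) := lt_of_lt_of_eq k.isLt (Lh_sum M mi L)
        rw [symList_sum]
        omega⟩
    | .inr k => reflEnd m₀ ⟨M + (k : ℕ), by
        have hk : (k:ℕ) < M + (L.sum + mi) := lt_of_lt_of_eq k.isLt (Lh_sum M mi L)
        rw [symList_sum]
        omega⟩
  invFun x :=
    if h : M ≤ (x : ℕ) ∧ (x : ℕ) < M + (M :: (L ++ [mi])).sum then
      .inl ⟨(x : ℕ) - M, by rw [Lh_sum] at h ⊢; omega⟩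
    else
      .inr ⟨(reflEnd m₀ x : ℕ) - M, by
        have hxN := x.isLt
        have hNv := symList_sum m₀ minf L
        rw [Lh_sum] at h ⊢
        rw [not_and_or, not_le, not_lt] at h
        rcases h with h | h
        · have hr := reflEnd_val_lo (m₀ := m₀) x (by omega) (by omega)
          omega
        · have hr := reflEnd_val_hi x (m₀ := m₀) (by omega)
          omega⟩
  left_inv s := by
    have hNv := symList_sum m₀ minf L
    match s with
    | .inl k =>
      have hk : (k:ℕ) < M + (L.sum + mi) := lt_of_lt_of_eq k.isLt (Lh_sum M mi L)
      have hcond : M ≤ M + (k:ℕ) ∧ M + (k:ℕ) < M + (M :: (L ++ [mi])).sum :=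
        ⟨Nat.le_add_right M k, Nat.add_lt_add_left k.isLt M⟩
      dsimp only
      rw [dif_pos hcond]
      congr 1
      apply Fin.ext
      show M + (k:ℕ) - M = (k:ℕ)
      omega
    | .inr k =>
      have hk : (k:ℕ) < M + (L.sum + mi) := lt_of_lt_of_eq k.isLt (Lh_sum M mi L)
      have hlo : M ≤ M + (k:ℕ) := by omega
      have hMn : M + (k:ℕ) < (symList m₀ L minf).sum := by omega
      set z : Fin (symList m₀ L minf).sum := ⟨M + (k:ℕ), hMn⟩ with hz
      have hzval : (z : ℕ) = M + (k:ℕ) := rfl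
      -- reflEnd of z is outside the window
      have hout : ¬ (M ≤ (reflEnd m₀ z : ℕ) ∧
          (reflEnd m₀ z : ℕ) < M + (M :: (L ++ [mi])).sum) := by
        rw [Lh_sum]
        by_cases hc : (z : ℕ) < m₀
        · have hr := reflEnd_val_lo (m₀ := m₀) z hc (by omega)
          omega
        · have hr := reflEnd_val_hi z (m₀ := m₀) (by omega)
          rw [hzval] at hr
          omega
      dsimp only
      rw [dif_neg hout]
      congr 1
      apply Fin.ext
      simp only []
      rw [reflEnd_reflEnd z (by omega)]
      omega
  right_inv x := by
    have hNv := symList_sum m₀ minf L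
    have hxN := x.isLt
    by_cases h : M ≤ (x : ℕ) ∧ (x : ℕ) < M + (M :: (L ++ [mi])).sum
    · dsimp only
      rw [dif_pos h]
      apply Fin.ext
      simp only []
      omega
    · dsimp only
      rw [dif_neg h]
      have h2 : reflEnd m₀ (reflEnd m₀ x) = x := reflEnd_reflEnd x (by omega)
      have hmle : M ≤ (reflEnd m₀ x : ℕ) := by
        have hLs := Lh_sum M mi L
        rw [not_and_or, not_le, not_lt] at h
        rcases h with h | h
        · have hr := reflEnd_val_lo (m₀ := m₀) x (by omega) (by omega)
          omega
        · have hr := reflEnd_val_hi x (m₀ := m₀) (by omega)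
          omega
      refine Eq.trans (congrArg (reflEnd m₀) ?_) h2
      apply Fin.ext
      show M + ((reflEnd m₀ x : ℕ) - M) = (reflEnd m₀ x : ℕ)
      omega

section Split

variable (m₀ minf M mi : ℕ) (L : List ℕ) (hM : m₀ = M + M) (hmi : minf = mi + mi)

lemma e_inl_val (k : Fin ((M :: (L ++ [mi])).sum)) :
    ((splitEquiv m₀ minf M mi L hM hmi) (.inl k) : ℕ) = M + k := rfl

lemma e_inr_eq (k : Fin ((M :: (L ++ [mi])).sum)) (h : M + (k : ℕ) < (symList m₀ L minf).sum) :
    (splitEquiv m₀ minf M mi L hM hmi) (.inr k) = reflEnd m₀ ⟨M + (k : ℕ), h⟩ := rfl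

include hM hmi in
lemma e_inner_lt (k : Fin ((M :: (L ++ [mi])).sum)) : M + (k : ℕ) < (symList m₀ L minf).sum := by
  have hk := lt_of_lt_of_eq k.isLt (Lh_sum M mi L)
  rw [symList_sum]; omega

lemma e_inr_val (k : Fin ((M :: (L ++ [mi])).sum)) :
    ((k : ℕ) < M ∧
      ((splitEquiv m₀ minf M mi L hM hmi) (.inr k) : ℕ) = m₀ - 1 - (M + (k : ℕ))) ∨
    (M ≤ (k : ℕ) ∧
      ((splitEquiv m₀ minf M mi L hM hmi) (.inr k) : ℕ)
        = m₀ + (symList m₀ L minf).sum - 1 - (M + (k : ℕ))) := by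
  have h := e_inner_lt m₀ minf M mi L hM hmi k
  have hNv := symList_sum m₀ minf L
  rw [e_inr_eq m₀ minf M mi L hM hmi k h]
  by_cases hk : (k : ℕ) < M
  · exact Or.inl ⟨hk, reflEnd_val_lo (m₀ := m₀) ⟨M + (k:ℕ), h⟩ (by simp only []; omega) (by omega)⟩
  · exact Or.inr ⟨by omega, reflEnd_val_hi (m₀ := m₀) ⟨M + (k:ℕ), h⟩ (by simp only []; omega)⟩

lemma r_e_inl (k : Fin ((M :: (L ++ [mi])).sum)) :
    reflEnd m₀ ((splitEquiv m₀ minf M mi L hM hmi) (.inl k))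
      = (splitEquiv m₀ minf M mi L hM hmi) (.inr k) := rfl

lemma r_e_inr (k : Fin ((M :: (L ++ [mi])).sum)) :
    reflEnd m₀ ((splitEquiv m₀ minf M mi L hM hmi) (.inr k))
      = (splitEquiv m₀ minf M mi L hM hmi) (.inl k) := by
  rw [e_inr_eq m₀ minf M mi L hM hmi k (e_inner_lt m₀ minf M mi L hM hmi k)]
  have : (symList m₀ L minf).sum = m₀ + (L.sum + (minf + L.sum)) := symList_sum m₀ minf L
  exact reflEnd_reflEnd _ (by omega)

def unfoldPerm (τ : Equiv.Perm (Fin ((M :: (L ++ [mi])).sum))) :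
    Equiv.Perm (Fin ((symList m₀ L minf).sum)) :=
  (splitEquiv m₀ minf M mi L hM hmi).permCongr (Equiv.sumCongr τ τ)

lemma unfold_inl (τ : Equiv.Perm (Fin ((M :: (L ++ [mi])).sum)))
    (k : Fin ((M :: (L ++ [mi])).sum)) :
    (unfoldPerm m₀ minf M mi L hM hmi τ) ((splitEquiv m₀ minf M mi L hM hmi) (.inl k))
      = (splitEquiv m₀ minf M mi L hM hmi) (.inl (τ k)) := by
  show (splitEquiv m₀ minf M mi L hM hmi) ((Equiv.sumCongr τ τ)
    ((splitEquiv m₀ minf M mi L hM hmi).symm ((splitEquiv m₀ minf M mi L hM hmi) (.inl k)))) = _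
  exact congrArg (splitEquiv m₀ minf M mi L hM hmi) (congrArg (Equiv.sumCongr τ τ)
    ((splitEquiv m₀ minf M mi L hM hmi).symm_apply_apply (.inl k)))

lemma unfold_inr (τ : Equiv.Perm (Fin ((M :: (L ++ [mi])).sum)))
    (k : Fin ((M :: (L ++ [mi])).sum)) :
    (unfoldPerm m₀ minf M mi L hM hmi τ) ((splitEquiv m₀ minf M mi L hM hmi) (.inr k))
      = (splitEquiv m₀ minf M mi L hM hmi) (.inr (τ k)) := by
  show (splitEquiv m₀ minf M mi L hM hmi) ((Equiv.sumCongr τ τ)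
    ((splitEquiv m₀ minf M mi L hM hmi).symm ((splitEquiv m₀ minf M mi L hM hmi) (.inr k)))) = _
  exact congrArg (splitEquiv m₀ minf M mi L hM hmi) (congrArg (Equiv.sumCongr τ τ)
    ((splitEquiv m₀ minf M mi L hM hmi).symm_apply_apply (.inr k)))

end Split




section Split2

variable (m₀ minf M mi : ℕ) (L : List ℕ) (hM : m₀ = M + M) (hmi : minf = mi + mi)

lemma unfold_good (τ : Equiv.Perm (Fin ((M :: (L ++ [mi])).sum)))
    (hτ : IsChordDiagram (M :: (L ++ [mi])) τ) :
    IsChordDiagram (symList m₀ L minf) (unfoldPerm m₀ minf M mi L hM hmi τ) ∧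
    ∀ i, (unfoldPerm m₀ minf M mi L hM hmi τ) (reflEnd m₀ i)
      = reflEnd m₀ ((unfoldPerm m₀ minf M mi L hM hmi τ) i) := by
  obtain ⟨hτ1, hτ2, hτ3, hτ4⟩ := hτ
  have hNv := symList_sum m₀ minf L
  have hLs := Lh_sum M mi L
  have key : ∀ x : Fin ((symList m₀ L minf).sum),
      ∃ s, (splitEquiv m₀ minf M mi L hM hmi) s = x :=
    fun x => ⟨(splitEquiv m₀ minf M mi L hM hmi).symm x,
      (splitEquiv m₀ minf M mi L hM hmi).apply_symm_apply x⟩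
  refine ⟨⟨?_, ?_, ?_, ?_⟩, ?_⟩
  · -- involution
    intro x
    obtain ⟨s, rfl⟩ := key x
    cases s with
    | inl k => rw [unfold_inl, unfold_inl, hτ1]
    | inr k => rw [unfold_inr, unfold_inr, hτ1]
  · -- fixed point free
    intro x h
    obtain ⟨s, rfl⟩ := key x
    cases s with
    | inl k =>
      rw [unfold_inl] at h
      exact hτ2 k (Sum.inl.inj ((splitEquiv m₀ minf M mi L hM hmi).injective h))
    | inr k =>
      rw [unfold_inr] at h
      exact hτ2 k (Sum.inr.inj ((splitEquiv m₀ minf M mi L hM hmi).injective h))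
  · -- noncrossing
    intro i j hcross
    obtain ⟨h1, h2, h3⟩ := hcross
    obtain ⟨si, rfl⟩ := key i
    obtain ⟨sj, rfl⟩ := key j
    cases si with
    | inl a =>
      rw [unfold_inl] at h2 h3
      cases sj with
      | inl b =>
        rw [unfold_inl] at h3
        rw [Fin.lt_def, e_inl_val, e_inl_val] at h1 h2 h3
        exact hτ3 a b ⟨by rw [Fin.lt_def]; omega, by rw [Fin.lt_def]; omega,
          by rw [Fin.lt_def]; omega⟩
      | inr b =>
        rw [unfold_inr] at h3
        rw [Fin.lt_def, e_inl_val] at h1 h2 h3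
        have hta := (τ a).isLt
        rcases e_inr_val m₀ minf M mi L hM hmi b with ⟨hb, hvb⟩ | ⟨hb, hvb⟩ <;> omega
    | inr a =>
      rw [unfold_inr] at h2 h3
      cases sj with
      | inl b =>
        rw [unfold_inl] at h3
        rw [Fin.lt_def, e_inl_val] at h1 h2 h3
        have htb := (τ b).isLt
        rcases e_inr_val m₀ minf M mi L hM hmi a with ⟨ha, hva⟩ | ⟨ha, hva⟩ <;>
          rcases e_inr_val m₀ minf M mi L hM hmi (τ a) with ⟨hta, hvta⟩ | ⟨hta, hvta⟩ <;>
          omega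
      | inr b =>
        rw [unfold_inr] at h3
        rw [Fin.lt_def] at h1 h2 h3
        have haa : τ (τ a) = a := hτ1 a
        have hbb : τ (τ b) = b := hτ1 b
        have hka := a.isLt
        have hkb := b.isLt
        rcases e_inr_val m₀ minf M mi L hM hmi a with ⟨ha, hva⟩ | ⟨ha, hva⟩ <;>
          rcases e_inr_val m₀ minf M mi L hM hmi b with ⟨hb, hvb⟩ | ⟨hb, hvb⟩ <;>
          rcases e_inr_val m₀ minf M mi L hM hmi (τ a) with ⟨hta, hvta⟩ | ⟨hta, hvta⟩ <;>
          rcases e_inr_val m₀ minf M mi L hM hmi (τ b) with ⟨htb, hvtb⟩ | ⟨htb, hvtb⟩ <;>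
          first
          | omega
          | exact hτ3 (τ b) (τ a) ⟨by rw [Fin.lt_def]; omega,
              by rw [hbb, Fin.lt_def]; omega,
              by rw [hbb, haa, Fin.lt_def]; omega⟩
          | exact hτ3 a (τ b) ⟨by rw [Fin.lt_def]; omega,
              by rw [Fin.lt_def]; omega,
              by rw [hbb, Fin.lt_def]; omega⟩
          | exact hτ3 b a ⟨by rw [Fin.lt_def]; omega,
              by rw [Fin.lt_def]; omega,
              by rw [Fin.lt_def]; omega⟩
          | exact hτ3 (τ a) b ⟨by rw [Fin.lt_def]; omega,
              by rw [haa, Fin.lt_def]; omega,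
              by rw [haa, Fin.lt_def]; omega⟩
  · -- vertices distinct
    intro x
    obtain ⟨s, rfl⟩ := key x
    cases s with
    | inl k =>
      rw [unfold_inl, e_inl_val, e_inl_val,
        vtx_half m₀ minf M mi L hM hmi k (by have := k.isLt; omega),
        vtx_half m₀ minf M mi L hM hmi (τ k) (by have := (τ k).isLt; omega)]
      exact hτ4 k
    | inr k =>
      rw [unfold_inr,
        e_inr_eq m₀ minf M mi L hM hmi k (e_inner_lt m₀ minf M mi L hM hmi k),
        e_inr_eq m₀ minf M mi L hM hmi (τ k) (e_inner_lt m₀ minf M mi L hM hmi (τ k))]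
      have hk := lt_of_lt_of_eq k.isLt hLs
      have htk := lt_of_lt_of_eq (τ k).isLt hLs
      have s1 := vtx_refl_spec m₀ minf M mi _ L rfl hM hmi
        ⟨M + (k:ℕ), e_inner_lt m₀ minf M mi L hM hmi k⟩ (by simp only []; omega)
        (by simp only []; omega)
      have s2 := vtx_refl_spec m₀ minf M mi _ L rfl hM hmi
        ⟨M + ((τ k:ℕ)), e_inner_lt m₀ minf M mi L hM hmi (τ k)⟩ (by simp only []; omega)
        (by simp only []; omega)
      have hneq : vertexOf (symList m₀ L minf) (M + (k:ℕ))
          ≠ vertexOf (symList m₀ L minf) (M + ((τ k : ℕ))) := by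
        rw [vtx_half m₀ minf M mi L hM hmi k (by omega),
          vtx_half m₀ minf M mi L hM hmi (τ k) (by omega)]
        exact hτ4 k
      simp only [Fin.val_mk] at s1 s2
      rcases s1 with ⟨a1, a2⟩ | ⟨a1, a2, a3⟩ | ⟨a1, a2⟩ <;>
        rcases s2 with ⟨b1, b2⟩ | ⟨b1, b2, b3⟩ | ⟨b1, b2⟩ <;> omega
  · -- symmetric
    intro x
    obtain ⟨s, rfl⟩ := key x
    cases s with
    | inl k => rw [r_e_inl, unfold_inr, unfold_inl, r_e_inl]
    | inr k => rw [r_e_inr, unfold_inl, unfold_inr, r_e_inr]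

end Split2
section Fold

def foldFun (M n : ℕ) {N : ℕ} (hn : M + n ≤ N) (σ : Equiv.Perm (Fin N))
    (hcl : ∀ x : Fin N, M ≤ (x : ℕ) → (x : ℕ) < M + n → M ≤ (σ x : ℕ) ∧ (σ x : ℕ) < M + n)
    (k : Fin n) : Fin n :=
  ⟨(σ ⟨M + (k : ℕ), by have := k.isLt; omega⟩ : ℕ) - M, by
    have h := hcl ⟨M + (k : ℕ), by have := k.isLt; omega⟩ (by simp only []; omega)
      (by simp only []; have := k.isLt; omega)
    omega⟩

lemma foldFun_val (M n : ℕ) {N : ℕ} (hn : M + n ≤ N) (σ : Equiv.Perm (Fin N))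
    (hcl : ∀ x : Fin N, M ≤ (x : ℕ) → (x : ℕ) < M + n → M ≤ (σ x : ℕ) ∧ (σ x : ℕ) < M + n)
    (k : Fin n) (h : M + (k : ℕ) < N) :
    (foldFun M n hn σ hcl k : ℕ) = (σ ⟨M + (k : ℕ), h⟩ : ℕ) - M := rfl

lemma foldFun_invol (M n : ℕ) {N : ℕ} (hn : M + n ≤ N) (σ : Equiv.Perm (Fin N))
    (hinv : ∀ i, σ (σ i) = i)
    (hcl : ∀ x : Fin N, M ≤ (x : ℕ) → (x : ℕ) < M + n → M ≤ (σ x : ℕ) ∧ (σ x : ℕ) < M + n)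
    (k : Fin n) : foldFun M n hn σ hcl (foldFun M n hn σ hcl k) = k := by
  have hk := k.isLt
  have hb1 : M + (k : ℕ) < N := by omega
  have hzb := hcl ⟨M + (k : ℕ), hb1⟩ (Nat.le_add_right M k) (by simp only []; omega)
  have h1 : (foldFun M n hn σ hcl k : ℕ) = (σ ⟨M + (k : ℕ), hb1⟩ : ℕ) - M :=
    foldFun_val M n hn σ hcl k hb1
  have hb2 : M + ((foldFun M n hn σ hcl k : ℕ)) < N := by omega
  apply Fin.ext
  rw [foldFun_val M n hn σ hcl _ hb2]
  have hfix : (⟨M + ((foldFun M n hn σ hcl k : ℕ)), hb2⟩ : Fin N) = σ ⟨M + (k : ℕ), hb1⟩ :=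
    Fin.ext (by simp only []; omega)
  rw [hfix, hinv ⟨M + (k : ℕ), hb1⟩]
  simp only []
  omega

def foldPerm (M n : ℕ) {N : ℕ} (hn : M + n ≤ N) (σ : Equiv.Perm (Fin N))
    (hinv : ∀ i, σ (σ i) = i)
    (hcl : ∀ x : Fin N, M ≤ (x : ℕ) → (x : ℕ) < M + n → M ≤ (σ x : ℕ) ∧ (σ x : ℕ) < M + n) :
    Equiv.Perm (Fin n) :=
  ⟨foldFun M n hn σ hcl, foldFun M n hn σ hcl,
    foldFun_invol M n hn σ hinv hcl, foldFun_invol M n hn σ hinv hcl⟩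

lemma foldPerm_val (M n : ℕ) {N : ℕ} (hn : M + n ≤ N) (σ : Equiv.Perm (Fin N))
    (hinv : ∀ i, σ (σ i) = i)
    (hcl : ∀ x : Fin N, M ≤ (x : ℕ) → (x : ℕ) < M + n → M ≤ (σ x : ℕ) ∧ (σ x : ℕ) < M + n)
    (k : Fin n) (h : M + (k : ℕ) < N) :
    ((foldPerm M n hn σ hinv hcl) k : ℕ) = (σ ⟨M + (k : ℕ), h⟩ : ℕ) - M := rfl

end Fold
section Main

variable (m₀ minf M mi : ℕ) (L : List ℕ) (hM : m₀ = M + M) (hmi : minf = mi + mi)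

include hM hmi in
lemma mk_hn : M + (M :: (L ++ [mi])).sum ≤ (symList m₀ L minf).sum := by
  rw [Lh_sum, symList_sum]; omega

include hM hmi in
lemma mk_hcl (hbig : 2 * L.sum < m₀)
    (σ : Equiv.Perm (Fin ((symList m₀ L minf).sum)))
    (hσ : IsChordDiagram (symList m₀ L minf) σ)
    (hsym : ∀ i, σ (reflEnd m₀ i) = reflEnd m₀ (σ i)) :
    ∀ x : Fin ((symList m₀ L minf).sum), M ≤ (x : ℕ) →
      (x : ℕ) < M + (M :: (L ++ [mi])).sum →
      M ≤ (σ x : ℕ) ∧ (σ x : ℕ) < M + (M :: (L ++ [mi])).sum := by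
  intro x h1 h2
  have hLs := Lh_sum M mi L
  have h := ncClosure m₀ minf M mi _ L rfl hM hmi hbig σ hσ.1 hσ.2.2.1 hσ.2.2.2 hsym x
    (by omega) (by omega)
  constructor <;> omega

include hM hmi in
lemma fold_good
    (σ : Equiv.Perm (Fin ((symList m₀ L minf).sum)))
    (hinv : ∀ i, σ (σ i) = i) (hfpf : ∀ i, σ i ≠ i)
    (hC : ∀ i j, ¬(i < j ∧ j < σ i ∧ σ i < σ j))
    (hV : ∀ i : Fin ((symList m₀ L minf).sum),
      vertexOf (symList m₀ L minf) (i : ℕ) ≠ vertexOf (symList m₀ L minf) ((σ i : ℕ)))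
    (hn : M + (M :: (L ++ [mi])).sum ≤ (symList m₀ L minf).sum)
    (hcl : ∀ x : Fin ((symList m₀ L minf).sum), M ≤ (x : ℕ) →
      (x : ℕ) < M + (M :: (L ++ [mi])).sum →
      M ≤ (σ x : ℕ) ∧ (σ x : ℕ) < M + (M :: (L ++ [mi])).sum) :
    IsChordDiagram (M :: (L ++ [mi]))
      (foldPerm M ((M :: (L ++ [mi])).sum) hn σ hinv hcl) := by
  have hLs := Lh_sum M mi L
  have hNv := symList_sum m₀ minf L
  refine ⟨fun k => foldFun_invol M _ hn σ hinv hcl k, ?_, ?_, ?_⟩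
  · -- fixed point free
    intro k h
    have hk := k.isLt
    have hbk : M + (k : ℕ) < (symList m₀ L minf).sum := by omega
    have hv := congrArg Fin.val h
    rw [foldPerm_val M _ hn σ hinv hcl k hbk] at hv
    have hcc := hcl ⟨M + (k:ℕ), hbk⟩ (Nat.le_add_right M k) (by simp only []; omega)
    exact hfpf ⟨M + (k:ℕ), hbk⟩ (Fin.ext (by simp only []; omega))
  · -- noncrossing
    intro u v hg
    obtain ⟨g1, g2, g3⟩ := hg
    have hu := u.isLt
    have hv' := v.isLt
    have hbu : M + (u : ℕ) < (symList m₀ L minf).sum := by omega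
    have hbv : M + (v : ℕ) < (symList m₀ L minf).sum := by omega
    rw [Fin.lt_def] at g1 g2 g3
    rw [foldPerm_val M _ hn σ hinv hcl u hbu] at g2 g3
    rw [foldPerm_val M _ hn σ hinv hcl v hbv] at g3
    have hcu := hcl ⟨M + (u:ℕ), hbu⟩ (Nat.le_add_right M u) (by simp only []; omega)
    have hcv := hcl ⟨M + (v:ℕ), hbv⟩ (Nat.le_add_right M v) (by simp only []; omega)
    exact hC ⟨M + (u:ℕ), hbu⟩ ⟨M + (v:ℕ), hbv⟩
      ⟨by simp only [Fin.lt_def, Fin.val_mk]; omega,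
       by simp only [Fin.lt_def, Fin.val_mk]; omega,
       by simp only [Fin.lt_def, Fin.val_mk]; omega⟩
  · -- vertex condition
    intro k
    have hk := k.isLt
    have hbk : M + (k : ℕ) < (symList m₀ L minf).sum := by omega
    have hcc := hcl ⟨M + (k:ℕ), hbk⟩ (Nat.le_add_right M k) (by simp only []; omega)
    have hfk := ((foldPerm M ((M :: (L ++ [mi])).sum) hn σ hinv hcl) k).isLt
    rw [← vtx_half m₀ minf M mi L hM hmi (k : ℕ) (by omega),
      ← vtx_half m₀ minf M mi L hM hmi
        ((foldPerm M ((M :: (L ++ [mi])).sum) hn σ hinv hcl) k : ℕ) (by omega)]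
    have h2 : M + (((foldPerm M ((M :: (L ++ [mi])).sum) hn σ hinv hcl) k) : ℕ)
        = (σ ⟨M + (k:ℕ), hbk⟩ : ℕ) := by
      rw [foldPerm_val M _ hn σ hinv hcl k hbk]; omega
    rw [h2]
    exact hV ⟨M + (k:ℕ), hbk⟩

end Main
section Count

variable (m₀ minf M mi : ℕ) (L : List ℕ) (hM : m₀ = M + M) (hmi : minf = mi + mi)

include hM hmi in
lemma fold_unfold_inl (σ : Equiv.Perm (Fin ((symList m₀ L minf).sum)))
    (hinv : ∀ i, σ (σ i) = i)
    (hn : M + (M :: (L ++ [mi])).sum ≤ (symList m₀ L minf).sum)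
    (hcl : ∀ x : Fin ((symList m₀ L minf).sum), M ≤ (x : ℕ) →
      (x : ℕ) < M + (M :: (L ++ [mi])).sum →
      M ≤ (σ x : ℕ) ∧ (σ x : ℕ) < M + (M :: (L ++ [mi])).sum)
    (k : Fin ((M :: (L ++ [mi])).sum)) :
    (splitEquiv m₀ minf M mi L hM hmi)
        (.inl ((foldPerm M ((M :: (L ++ [mi])).sum) hn σ hinv hcl) k))
      = σ ((splitEquiv m₀ minf M mi L hM hmi) (.inl k)) := by
  have hbk := e_inner_lt m₀ minf M mi L hM hmi k
  have heq : (splitEquiv m₀ minf M mi L hM hmi) (.inl k) = ⟨M + (k : ℕ), hbk⟩ :=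
    Fin.ext (e_inl_val m₀ minf M mi L hM hmi k)
  have hcc := hcl ⟨M + (k:ℕ), hbk⟩ (Nat.le_add_right M k)
    (by simp only []; have := lt_of_lt_of_eq k.isLt (Lh_sum M mi L); omega)
  apply Fin.ext
  rw [e_inl_val, heq, foldPerm_val M _ hn σ hinv hcl k hbk]
  omega

include hM hmi in
lemma count_eq (hbig : 2 * L.sum < m₀) :
    symCount m₀ L minf = chordCount (M :: (L ++ [mi])) := by
  rw [symCount, chordCount]
  have key : ∀ x : Fin ((symList m₀ L minf).sum),
      ∃ s, (splitEquiv m₀ minf M mi L hM hmi) s = x :=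
    fun x => ⟨(splitEquiv m₀ minf M mi L hM hmi).symm x,
      (splitEquiv m₀ minf M mi L hM hmi).apply_symm_apply x⟩
  apply Nat.card_congr
  refine
    { toFun := fun p => ⟨foldPerm M ((M :: (L ++ [mi])).sum)
        (mk_hn m₀ minf M mi L hM hmi) p.1 p.2.1.1
        (mk_hcl m₀ minf M mi L hM hmi hbig p.1 p.2.1 p.2.2),
        fold_good m₀ minf M mi L hM hmi p.1 p.2.1.1 p.2.1.2.1 p.2.1.2.2.1 p.2.1.2.2.2
          (mk_hn m₀ minf M mi L hM hmi)
          (mk_hcl m₀ minf M mi L hM hmi hbig p.1 p.2.1 p.2.2)⟩,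
      invFun := fun q => ⟨unfoldPerm m₀ minf M mi L hM hmi q.1,
        (unfold_good m₀ minf M mi L hM hmi q.1 q.2).1,
        (unfold_good m₀ minf M mi L hM hmi q.1 q.2).2⟩,
      left_inv := ?_, right_inv := ?_ }
  · rintro ⟨σ, hσ, hsym⟩
    apply Subtype.ext
    apply Equiv.ext
    intro x
    obtain ⟨s, rfl⟩ := key x
    cases s with
    | inl k =>
      rw [unfold_inl]
      exact fold_unfold_inl m₀ minf M mi L hM hmi σ hσ.1 _ _ k
    | inr k =>
      rw [unfold_inr]
      calc (splitEquiv m₀ minf M mi L hM hmi) (.inr _)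
          = reflEnd m₀ ((splitEquiv m₀ minf M mi L hM hmi) (.inl _)) :=
            (r_e_inl m₀ minf M mi L hM hmi _).symm
        _ = reflEnd m₀ (σ ((splitEquiv m₀ minf M mi L hM hmi) (.inl k))) := by
            rw [fold_unfold_inl m₀ minf M mi L hM hmi σ hσ.1 _ _ k]
        _ = σ (reflEnd m₀ ((splitEquiv m₀ minf M mi L hM hmi) (.inl k))) :=
            (hsym ((splitEquiv m₀ minf M mi L hM hmi) (.inl k))).symm
        _ = σ ((splitEquiv m₀ minf M mi L hM hmi) (.inr k)) := by
            rw [r_e_inl]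
  · rintro ⟨τ, hτ⟩
    apply Subtype.ext
    apply Equiv.ext
    intro k
    apply Fin.ext
    have hbk := e_inner_lt m₀ minf M mi L hM hmi k
    rw [foldPerm_val M _ _ _ _ _ k hbk]
    have heq : (⟨M + (k : ℕ), hbk⟩ : Fin ((symList m₀ L minf).sum))
        = (splitEquiv m₀ minf M mi L hM hmi) (.inl k) :=
      (Fin.ext (e_inl_val m₀ minf M mi L hM hmi k)).symm
    rw [heq, unfold_inl, e_inl_val]
    omega

end Count

/-- If `m₀ > 2(m₁ + … + m_{n-2})`, then a symmetric chord diagram with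
degrees `m₀` at `0`, `L = [m₁, …, m_{n-2}]` at the positive vertices and
`minf` at `∞` has no crossing edges, and consequently
`E(m₀, m₁, …, m_{n-2}, minf) = K(m₀/2, m₁, …, m_{n-2}, minf/2)`. -/
theorem no_crossing_and_split (m₀ minf : ℕ) (L : List ℕ)
    (h₀ : Even m₀) (hinf : Even minf) (hbig : 2 * L.sum < m₀) :
    (∀ σ : Equiv.Perm (Fin (symList m₀ L minf).sum),
      IsChordDiagram (symList m₀ L minf) σ →
      (∀ i, σ (reflEnd m₀ i) = reflEnd m₀ (σ i)) →
      ∀ x : Fin (symList m₀ L minf).sum, m₀ ≤ (x : ℕ) → (x : ℕ) < m₀ + L.sum →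
        ((σ x : ℕ)) < m₀ + L.sum + minf) ∧
    symCount m₀ L minf = chordCount (m₀ / 2 :: (L ++ [minf / 2])) := by
  obtain ⟨M, hM⟩ := h₀
  obtain ⟨mi, hmi⟩ := hinf
  constructor
  · intro σ hσ hsym x hx1 hx2
    have hLs := Lh_sum M mi L
    have h := ncClosure m₀ minf M mi _ L rfl hM hmi hbig σ hσ.1 hσ.2.2.1 hσ.2.2.2 hsym x
      (by omega) (by omega)
    omega
  · have e1 : m₀ / 2 = M := by omega
    have e2 : minf / 2 = mi := by omega
    rw [e1, e2]
    exact count_eq m₀ minf M mi L hM hmi hbig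
end
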